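/- arXiv:1903.08266 — 9 statements merged into one kernel-verified Lean document; each statement's English description precedes it below -/
import Mathlib

section
/- Let n > 1 and let 0 ≤ t ≤ n be an integer. Then r_3(ℤ_4^n) ≥ ∑_{i=t+1}^{n} C(n, i) · C₂(i, i−t), where C(n,i) is the binomial coefficient and C₂(i, d) denotes the largest possible size of a (possibly non-linear) binary code in 𝔽_2^i with pairwise Hamming distance at least d between distinct codewords. Consequently r_3(ℤ_4^n) ≥ max_{0 ≤ t ≤ n} ∑_{i=t+1}^{n} C(n,i) · C₂(i, i−t). -/
/-- `S ⊆ (ℤ/mℤ)^n` contains no proper `k`-term arithmetic progression. -/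
def ProgFree (m k : ℕ) {n : ℕ} (S : Finset (Fin n → ZMod m)) : Prop :=
  ¬ ∃ x d : Fin n → ZMod m,
      (Function.Injective fun i : Fin k => x + (i : ℕ) • d) ∧
      ∀ i : Fin k, x + (i : ℕ) • d ∈ S

/-- Maximal size of a subset of `(ℤ/mℤ)^n` without a proper `k`-term AP. -/
noncomputable def rAP (k m n : ℕ) : ℕ :=
  sSup {c : ℕ | ∃ S : Finset (Fin n → ZMod m), ProgFree m k S ∧ S.card = c}

/-- `maxCode i d`: the largest size of a (possibly non-linear) binary code in
`𝔽₂^i` with pairwise Hamming distance at least `d` between distinct codewords. -/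
noncomputable def maxCode (i d : ℕ) : ℕ :=
  sSup {c : ℕ | ∃ T : Finset (Fin i → ZMod 2),
    (∀ x ∈ T, ∀ y ∈ T, x ≠ y → d ≤ hammingDist x y) ∧ T.card = c}

open Finset

noncomputable def phiMap {n : ℕ} (A : Finset (Fin n)) (w : Fin A.card → ZMod 2) :
    Fin n → ZMod 4 :=
  fun j => if h : j ∈ A then
    (if w ((A.orderIsoOfFin rfl).symm ⟨j, h⟩) = 0 then 1 else 3) else 0

lemma phiMap_vals {n : ℕ} (A : Finset (Fin n)) (w : Fin A.card → ZMod 2) (j : Fin n) :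
    phiMap A w j = 0 ∨ phiMap A w j = 1 ∨ phiMap A w j = 3 := by
  unfold phiMap; split_ifs <;> simp

lemma phiMap_ne_zero_iff {n : ℕ} (A : Finset (Fin n)) (w : Fin A.card → ZMod 2) (j : Fin n) :
    phiMap A w j ≠ 0 ↔ j ∈ A := by
  unfold phiMap
  split_ifs with h h2 <;> simp [h] <;> decide

lemma phiMap_apply_iso {n : ℕ} (A : Finset (Fin n)) (w : Fin A.card → ZMod 2)
    (k : Fin A.card) :
    phiMap A w ((A.orderIsoOfFin rfl k : Fin n)) = if w k = 0 then 1 else 3 := by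
  unfold phiMap
  have hmem : ((A.orderIsoOfFin rfl k : Fin n)) ∈ A := (A.orderIsoOfFin rfl k).2
  rw [dif_pos hmem]
  congr 2
  have : (⟨(A.orderIsoOfFin rfl k : Fin n), hmem⟩ : {x // x ∈ A}) = A.orderIsoOfFin rfl k := rfl
  rw [this, OrderIso.symm_apply_apply]

lemma phiMap_inj {n : ℕ} (A : Finset (Fin n)) : Function.Injective (phiMap A) := by
  intro w v h
  funext k
  have := congrFun h ((A.orderIsoOfFin rfl k : Fin n))
  rw [phiMap_apply_iso, phiMap_apply_iso] at this
  have h2 : ∀ u : ZMod 2, u ≠ 0 → u = 1 := by decide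
  by_cases hw : w k = 0 <;> by_cases hv : v k = 0 <;>
    simp [hw, hv] at this ⊢
  · exact absurd this (by decide)
  · exact absurd this (by decide)
  · rw [h2 _ hw, h2 _ hv]

lemma phiMap_support {n : ℕ} {A B : Finset (Fin n)} {w : Fin A.card → ZMod 2}
    {v : Fin B.card → ZMod 2} (h : phiMap A w = phiMap B v) : A = B := by
  ext j
  rw [← phiMap_ne_zero_iff A w j, ← phiMap_ne_zero_iff B v j, h]

lemma ham_le {n : ℕ} {A B : Finset (Fin n)} {w v : Fin A.card → ZMod 2}
    (hBA : B ⊆ A) (heq : ∀ j ∈ B, phiMap A w j = phiMap A v j) :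
    hammingDist w v ≤ A.card - B.card := by
  rw [← Finset.card_sdiff_of_subset hBA]
  have : hammingDist w v = (Finset.univ.filter fun k => w k ≠ v k).card := rfl
  rw [this]
  apply Finset.card_le_card_of_injOn (fun k => (A.orderIsoOfFin rfl k : Fin n))
  · intro k hk
    simp only [Finset.mem_coe, Finset.mem_filter, Finset.mem_univ, true_and] at hk
    rw [Finset.mem_coe, Finset.mem_sdiff]
    refine ⟨(A.orderIsoOfFin rfl k).2, fun hB => ?_⟩
    have := heq _ hB
    rw [phiMap_apply_iso, phiMap_apply_iso] at this
    have h2 : ∀ u : ZMod 2, u ≠ 0 → u = 1 := by decide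
    by_cases hw : w k = 0 <;> by_cases hv : v k = 0
    · exact hk (hw.trans hv.symm)
    · rw [if_pos hw, if_neg hv] at this; exact absurd this (by decide)
    · rw [if_neg hw, if_pos hv] at this; exact absurd this (by decide)
    · exact hk ((h2 _ hw).trans (h2 _ hv).symm)
  · intro k _ k' _ hkk
    have : (A.orderIsoOfFin rfl k) = (A.orderIsoOfFin rfl k') := Subtype.ext hkk
    exact (A.orderIsoOfFin rfl).injective this

lemma exists_code (i d : ℕ) :
    ∃ T : Finset (Fin i → ZMod 2),
      (∀ x ∈ T, ∀ y ∈ T, x ≠ y → d ≤ hammingDist x y) ∧ T.card = maxCode i d := by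
  have hne : ({c : ℕ | ∃ T : Finset (Fin i → ZMod 2),
      (∀ x ∈ T, ∀ y ∈ T, x ≠ y → d ≤ hammingDist x y) ∧ T.card = c}).Nonempty :=
    ⟨0, ∅, by simp, by simp⟩
  have hbdd : BddAbove {c : ℕ | ∃ T : Finset (Fin i → ZMod 2),
      (∀ x ∈ T, ∀ y ∈ T, x ≠ y → d ≤ hammingDist x y) ∧ T.card = c} := by
    refine ⟨Fintype.card (Fin i → ZMod 2), fun c hc => ?_⟩
    obtain ⟨T, _, rfl⟩ := hc
    exact Finset.card_le_univ T
  have := Nat.sSup_mem hne hbdd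
  obtain ⟨T, hT, hTc⟩ := this
  exact ⟨T, hT, hTc⟩

lemma zmod4_fact : ∀ u v w : ZMod 4,
    (u = 0 ∨ u = 1 ∨ u = 3) → (v = 0 ∨ v = 1 ∨ v = 3) → (w = 0 ∨ w = 1 ∨ w = 3) →
    u + w = 2 * v → ((u = 0 ↔ w = 0) ∧ (v ≠ 0 → u = w ∧ u ≠ 0)) := by decide

theorem stmt1 (n : ℕ) (hn : 1 < n) :
    (∀ t : ℕ, t ≤ n →
      ∑ i ∈ Finset.Icc (t + 1) n, n.choose i * maxCode i (i - t) ≤ rAP 3 4 n) ∧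
    (Finset.Icc 0 n).sup
        (fun t => ∑ i ∈ Finset.Icc (t + 1) n, n.choose i * maxCode i (i - t))
      ≤ rAP 3 4 n := by
  have main : ∀ t : ℕ, t ≤ n →
      ∑ i ∈ Finset.Icc (t + 1) n, n.choose i * maxCode i (i - t) ≤ rAP 3 4 n := by
    intro t ht
    choose T hTdist hTcard using fun i => exists_code i (i - t)
    set S : Finset (Fin n → ZMod 4) :=
      ((Finset.univ : Finset (Fin n)).powerset.filter fun A => t < A.card).biUnion
        (fun A => (T A.card).image (phiMap A)) with hS
    have hmemS : ∀ z, z ∈ S ↔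
        ∃ A : Finset (Fin n), t < A.card ∧ ∃ w ∈ T A.card, phiMap A w = z := by
      intro z
      simp only [hS, Finset.mem_biUnion, Finset.mem_filter, Finset.mem_powerset,
        Finset.mem_image, Finset.subset_univ, true_and]
    have hfree : ProgFree 4 3 S := by
      rintro ⟨x, d, hinj, hmem⟩
      obtain ⟨A₁, hA₁, w₁, hw₁, hp₁⟩ := (hmemS _).1 (hmem 0)
      obtain ⟨A₂, hA₂, w₂, hw₂, hp₂⟩ := (hmemS _).1 (hmem 1)
      obtain ⟨A₃, hA₃, w₃, hw₃, hp₃⟩ := (hmemS _).1 (hmem 2)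
      have key : ∀ j, phiMap A₁ w₁ j + phiMap A₃ w₃ j = 2 * phiMap A₂ w₂ j := by
        intro j
        have e₁ := congrFun hp₁ j
        have e₂ := congrFun hp₂ j
        have e₃ := congrFun hp₃ j
        have c0 : ((0 : Fin 3) : ℕ) = 0 := rfl
        have c1 : ((1 : Fin 3) : ℕ) = 1 := rfl
        have c2 : ((2 : Fin 3) : ℕ) = 2 := rfl
        rw [c0] at e₁; rw [c1] at e₂; rw [c2] at e₃
        simp only [Pi.add_apply, Pi.smul_apply] at e₁ e₂ e₃
        rw [e₁, e₂, e₃, zero_smul, one_smul, two_smul]; ring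
      have fact : ∀ j, (phiMap A₁ w₁ j = 0 ↔ phiMap A₃ w₃ j = 0) ∧
          (phiMap A₂ w₂ j ≠ 0 → phiMap A₁ w₁ j = phiMap A₃ w₃ j ∧ phiMap A₁ w₁ j ≠ 0) :=
        fun j => zmod4_fact _ _ _ (phiMap_vals A₁ w₁ j) (phiMap_vals A₂ w₂ j)
          (phiMap_vals A₃ w₃ j) (key j)
      have hAeq : A₃ = A₁ := by
        ext j
        rw [← phiMap_ne_zero_iff A₁ w₁ j, ← phiMap_ne_zero_iff A₃ w₃ j]
        exact (not_congr (fact j).1).symm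
      subst hAeq
      have hsub : A₂ ⊆ A₃ := fun j hj =>
        (phiMap_ne_zero_iff A₃ w₁ j).1 (((fact j).2 ((phiMap_ne_zero_iff A₂ w₂ j).2 hj)).2)
      have heq : ∀ j ∈ A₂, phiMap A₃ w₁ j = phiMap A₃ w₃ j := fun j hj =>
        ((fact j).2 ((phiMap_ne_zero_iff A₂ w₂ j).2 hj)).1
      have hham : hammingDist w₁ w₃ ≤ A₃.card - A₂.card := ham_le hsub heq
      have hw13 : w₁ = w₃ := by
        by_contra hne
        have := hTdist A₃.card w₁ hw₁ w₃ hw₃ hne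
        omega
      have hx : (fun i : Fin 3 => x + (i : ℕ) • d) 0 = (fun i : Fin 3 => x + (i : ℕ) • d) 2 := by
        simp only
        rw [← hp₁, ← hp₃, hw13]
      exact absurd (hinj hx) (by decide)
    have hcard : S.card = ∑ i ∈ Finset.Icc (t + 1) n, n.choose i * maxCode i (i - t) := by
      rw [hS, Finset.card_biUnion]
      · have step1 : ∀ A ∈ (Finset.univ : Finset (Fin n)).powerset.filter fun A => t < A.card,
            ((T A.card).image (phiMap A)).card = maxCode A.card (A.card - t) := by
          intro A _
          rw [Finset.card_image_of_injective _ (phiMap_inj A), hTcard]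
        rw [Finset.sum_congr rfl step1]
        have hsplit : ((Finset.univ : Finset (Fin n)).powerset.filter fun A => t < A.card)
            = (Finset.Icc (t + 1) n).biUnion
                (fun i => Finset.powersetCard i (Finset.univ : Finset (Fin n))) := by
          ext A
          simp only [Finset.mem_filter, Finset.mem_powerset, Finset.subset_univ, true_and,
            Finset.mem_biUnion, Finset.mem_Icc, Finset.mem_powersetCard]
          constructor
          · intro h
            have hle : A.card ≤ n := by
              simpa using Finset.card_le_univ A
            exact ⟨A.card, ⟨h, hle⟩, rfl⟩
          · rintro ⟨i, ⟨h1, _⟩, rfl⟩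
            omega
        rw [hsplit, Finset.sum_biUnion]
        · apply Finset.sum_congr rfl
          intro i hi
          have : ∀ A ∈ Finset.powersetCard i (Finset.univ : Finset (Fin n)),
              maxCode A.card (A.card - t) = maxCode i (i - t) := by
            intro A hA
            rw [(Finset.mem_powersetCard.1 hA).2]
          rw [Finset.sum_congr rfl this, Finset.sum_const, Finset.card_powersetCard,
            Finset.card_univ, Fintype.card_fin, smul_eq_mul]
        · intro i hi j hj hij
          simp only [Function.onFun]
          rw [Finset.disjoint_left]
          intro A hAi hAj
          exact hij ((Finset.mem_powersetCard.1 hAi).2.symm.trans (Finset.mem_powersetCard.1 hAj).2)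
      · intro A hA B hB hAB
        simp only [Function.onFun]
        rw [Finset.disjoint_left]
        intro z hzA hzB
        obtain ⟨w, _, hw⟩ := Finset.mem_image.1 hzA
        obtain ⟨v, _, hv⟩ := Finset.mem_image.1 hzB
        exact hAB (phiMap_support (hw.trans hv.symm))
    have hbdd : BddAbove {c : ℕ | ∃ S : Finset (Fin n → ZMod 4), ProgFree 4 3 S ∧ S.card = c} := by
      refine ⟨Fintype.card (Fin n → ZMod 4), fun c hc => ?_⟩
      obtain ⟨S', _, rfl⟩ := hc
      exact Finset.card_le_univ S'
    calc ∑ i ∈ Finset.Icc (t + 1) n, n.choose i * maxCode i (i - t) = S.card := hcard.symm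
      _ ≤ rAP 3 4 n := le_csSup hbdd ⟨S, hfree, rfl⟩
  exact ⟨main, Finset.sup_le fun t htm => main t (Finset.mem_Icc.1 htm).2⟩
end

section
/- There exists a constant c > 0 such that for all n ≥ 1 one has r_3(ℤ_4^n) ≥ c · 3^n / √n. In particular, there exists a progression-free set S ⊆ (ℤ/4ℤ)^n (no proper 3-term arithmetic progression) with |S| ≥ 4^{0.7924 n} for all sufficiently large n. -/
open Finset

/-! ### The construction -/

def SS (n k : ℕ) : Finset (Fin n → ZMod 4) :=
  (Finset.powersetCard k Finset.univ).biUnion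
    (fun A => Fintype.piFinset fun i => if i ∈ A then ({1} : Finset (ZMod 4)) else {0, 2})

lemma mem_SS {n k : ℕ} {x : Fin n → ZMod 4} (hx : x ∈ SS n k) :
    (∀ i, x i ≠ 3) ∧ (Finset.univ.filter fun i => x i = 1).card = k := by
  simp only [SS, mem_biUnion, mem_powersetCard, Fintype.mem_piFinset] at hx
  obtain ⟨A, ⟨-, hA⟩, h⟩ := hx
  have key : ∀ i, (i ∈ A ↔ x i = 1) ∧ x i ≠ 3 := by
    intro i
    have := h i
    by_cases hi : i ∈ A <;> simp [hi] at this <;>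
      constructor <;> first | (rcases this with h|h <;> simp [h, hi] <;> decide) | simp [this, hi] <;> decide

  constructor
  · exact fun i => (key i).2
  · rw [← hA]; congr 1; ext i; simp [(key i).1]

lemma card_SS {n k : ℕ} : (SS n k).card = n.choose k * 2 ^ (n - k) := by
  rw [SS, Finset.card_biUnion]
  · have : ∀ A ∈ Finset.powersetCard k (Finset.univ : Finset (Fin n)),
        (Fintype.piFinset fun i => if i ∈ A then ({1} : Finset (ZMod 4)) else {0, 2}).card
          = 2 ^ (n - k) := by
      intro A hA
      rw [Fintype.card_piFinset]
      rw [mem_powersetCard] at hA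
      have : ∀ i, ((if i ∈ A then ({1} : Finset (ZMod 4)) else {0, 2}).card)
          = if i ∈ A then 1 else 2 := by
        intro i; by_cases hi : i ∈ A <;> simp [hi] <;> decide
      rw [Finset.prod_congr rfl fun i _ => this i, Finset.prod_ite]
      simp only [prod_const, one_pow, one_mul]
      congr 1
      have : Finset.filter (fun i => ¬ i ∈ A) Finset.univ = Aᶜ := by ext i; simp
      rw [this, card_compl, hA.2]
      simp
    rw [Finset.sum_congr rfl this, Finset.sum_const, Finset.card_powersetCard]
    simp [mul_comm]
  · intro A hA B hB hAB
    rw [Function.onFun, Finset.disjoint_left]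
    intro x hx1 hx2
    apply hAB
    simp only [Fintype.mem_piFinset] at hx1 hx2
    ext i
    have h1 := hx1 i; have h2 := hx2 i
    constructor
    · intro hi
      simp [hi] at h1
      by_contra hi2
      simp [hi2, h1] at h2
      exact absurd h2 (by decide)
    · intro hi
      simp [hi] at h2
      by_contra hi2
      simp [hi2, h2] at h1
      exact absurd h1 (by decide)

lemma progFree_SS (n k : ℕ) : ProgFree 4 3 (SS n k) := by
  rintro ⟨x, d, hinj, hmem⟩
  have h0 := hmem ⟨0, by norm_num⟩
  have h1 := hmem ⟨1, by norm_num⟩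
  have h2 := hmem ⟨2, by norm_num⟩
  simp only [Fin.val_mk] at h0 h1 h2
  rw [show ((0:ℕ) • d) = 0 by simp, add_zero] at h0
  rw [show ((1:ℕ) • d) = d by simp] at h1
  rw [show ((2:ℕ) • d) = d + d by rw [two_nsmul]] at h2
  obtain ⟨hx3, hxk⟩ := mem_SS h0
  obtain ⟨hy3, hyk⟩ := mem_SS h1
  obtain ⟨hz3, hzk⟩ := mem_SS h2
  have key1 : ∀ a e : ZMod 4, a ≠ 3 → a+e ≠ 3 → a+e+e ≠ 3 →
      ((a + e = 1) ↔ (a = 1 ∨ (e = 1 ∨ e = 3))) := by decide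
  have key2 : ∀ a e : ZMod 4, a ≠ 3 → a+e ≠ 3 → a+e+e ≠ 3 → a = 1 → ¬(e = 1 ∨ e = 3) := by
    decide
  have key3 : ∀ e : ZMod 4, ¬(e = 1 ∨ e = 3) → e + e = 0 := by decide
  have hpt : ∀ i, x i ≠ 3 ∧ x i + d i ≠ 3 ∧ x i + d i + d i ≠ 3 := by
    intro i
    refine ⟨hx3 i, ?_, ?_⟩
    · have := hy3 i; simpa using this
    · have := hz3 i; simpa [add_assoc] using this
  have hfilt : (Finset.univ.filter fun i => (x + d) i = 1)
      = (Finset.univ.filter fun i => x i = 1) ∪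
        (Finset.univ.filter fun i => d i = 1 ∨ d i = 3) := by
    rw [← Finset.filter_or]
    apply Finset.filter_congr
    intro i _
    obtain ⟨p1, p2, p3⟩ := hpt i
    have := key1 (x i) (d i) p1 p2 p3
    simpa using this
  have hdisj : Disjoint (Finset.univ.filter fun i => x i = 1)
      (Finset.univ.filter fun i => d i = 1 ∨ d i = 3) := by
    rw [Finset.disjoint_left]
    intro i hi1 hi2
    simp only [mem_filter] at hi1 hi2
    obtain ⟨p1, p2, p3⟩ := hpt i
    exact key2 (x i) (d i) p1 p2 p3 hi1.2 hi2.2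
  have hcard : k = k + (Finset.univ.filter fun i => d i = 1 ∨ d i = 3).card := by
    conv_lhs => rw [← hyk]
    rw [hfilt, Finset.card_union_of_disjoint hdisj, hxk]
  have hO : (Finset.univ.filter fun i => d i = 1 ∨ d i = 3) = ∅ := by
    rw [← Finset.card_eq_zero]; omega
  have hdd : d + d = 0 := by
    funext i
    have : i ∉ (Finset.univ.filter fun i => d i = 1 ∨ d i = 3) := by simp [hO]
    simp only [mem_filter, mem_univ, true_and] at this
    exact key3 (d i) this
  have : (⟨0, by norm_num⟩ : Fin 3) = ⟨2, by norm_num⟩ := by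
    apply hinj
    show x + (0:ℕ) • d = x + (2:ℕ) • d
    rw [two_nsmul, hdd]
    simp
  simp at this

/-! ### Binomial identities -/

def aa (n k : ℕ) : ℕ := n.choose k * 2 ^ (n - k)

lemma card_SS' (n k : ℕ) : (SS n k).card = aa n k := card_SS

lemma sumA (n : ℕ) : ∑ k ∈ range (n+1), aa n k = 3 ^ n := by
  have h := add_pow (1:ℕ) 2 n
  simp only [one_pow, one_mul, Nat.cast_id] at h
  have h2 : ∑ k ∈ range (n+1), aa n k = ∑ k ∈ range (n+1), 2 ^ (n-k) * n.choose k :=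
    Finset.sum_congr rfl (fun k _ => by rw [aa, mul_comm])
  rw [h2, ← h]

lemma sumH1 (n : ℕ) : ∑ k ∈ range (n+2), k * aa (n+1) k = (n+1) * 3 ^ n := by
  rw [Finset.sum_range_succ']
  simp only [zero_mul, add_zero]
  have : ∀ j ∈ range (n+1), (j+1) * aa (n+1) (j+1) = (n+1) * aa n j := by
    intro j hj
    rw [aa, aa]
    have h := Nat.add_one_mul_choose_eq n j
    have e : (n+1-(j+1)) = n - j := by omega
    rw [e]
    calc (j+1) * ((n+1).choose (j+1) * 2 ^ (n-j))
        = ((n+1).choose (j+1) * (j+1)) * 2 ^ (n-j) := by ring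
      _ = ((n+1) * n.choose j) * 2 ^ (n-j) := by rw [← h]
      _ = (n+1) * (n.choose j * 2 ^ (n-j)) := by ring
  rw [Finset.sum_congr rfl this, ← Finset.mul_sum, sumA]

lemma sumH2 (n : ℕ) :
    ∑ k ∈ range (n+3), k * (k-1) * aa (n+2) k = (n+2) * ((n+1) * 3 ^ n) := by
  rw [Finset.sum_range_succ']
  simp only [zero_mul, add_zero]
  have : ∀ j ∈ range (n+2), (j+1) * ((j+1)-1) * aa (n+2) (j+1) = (n+2) * (j * aa (n+1) j) := by
    intro j hj
    rw [aa, aa]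
    have h := Nat.add_one_mul_choose_eq (n+1) j
    have e : (n+2-(j+1)) = n+1-j := by omega
    rw [e]
    calc (j+1) * ((j+1)-1) * ((n+2).choose (j+1) * 2 ^ (n+1-j))
        = ((n+2).choose (j+1) * (j+1)) * (j * 2 ^ (n+1-j)) := by
          simp only [Nat.add_sub_cancel]; ring
      _ = ((n+2) * (n+1).choose j) * (j * 2 ^ (n+1-j)) := by rw [← h]
      _ = (n+2) * (j * ((n+1).choose j * 2 ^ (n+1-j))) := by ring
  rw [Finset.sum_congr rfl this, ← Finset.mul_sum, sumH1]

lemma sumB (n : ℕ) :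
    ∑ k ∈ range (n+1), (aa n k : ℤ) * (3*(k:ℤ) - (n:ℤ))^2 = 2 * (n:ℤ) * 3 ^ n := by
  rcases n with _ | m
  · norm_num [aa]
  rcases m with _ | m
  · norm_num [Finset.sum_range_succ, aa]
  · have key : ∀ k : ℕ, (aa (m+2) k : ℤ) * (3*(k:ℤ) - ((m+2:ℕ):ℤ))^2
        = 9 * ((k * (k-1) * aa (m+2) k : ℕ) : ℤ)
          + (9 - 6*(((m+2:ℕ)):ℤ)) * ((k * aa (m+2) k : ℕ) : ℤ)
          + (((m+2:ℕ)):ℤ)^2 * ((aa (m+2) k : ℕ) : ℤ) := by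
      intro k
      rcases k with _ | j
      · push_cast; ring
      · have e : (j+1) - 1 = j := rfl
        rw [e]
        push_cast
        ring
    have e1 : (m + 1 + 1 : ℕ) = m + 2 := rfl
    rw [e1, Finset.sum_congr rfl (fun k _ => key k)]
    rw [Finset.sum_add_distrib, Finset.sum_add_distrib, ← Finset.mul_sum, ← Finset.mul_sum,
      ← Finset.mul_sum, ← Nat.cast_sum, ← Nat.cast_sum, ← Nat.cast_sum]
    have h2 := sumH2 m
    have h1 := sumH1 (m+1)
    have h0 := sumA (m+2)
    have e2 : (m + 2 + 1 : ℕ) = m + 3 := rfl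
    rw [e2] at h0 ⊢
    have e3 : (m + 1 + 2 : ℕ) = m + 3 := rfl
    rw [e3] at h1
    have e4 : (m + 1 + 1 : ℕ) = m + 2 := rfl
    rw [e4] at h1
    rw [h2, h1, h0]
    push_cast
    ring

/-! ### Chebyshev-type concentration -/

lemma exists_big (n : ℕ) (hn : 1 ≤ n) :
    ∃ k ≤ n, (3:ℤ)^n ≤ 2 * (2 * (Nat.sqrt (4*n) : ℤ) + 1) * (aa n k : ℤ) := by
  set s : ℕ := Nat.sqrt (4*n) with hs
  set W : Finset ℕ := (range (n+1)).filter (fun k : ℕ => (3*(k:ℤ) - n)^2 ≤ 4*n) with hW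
  have houtle : ∑ k ∈ (range (n+1)).filter (fun k : ℕ => ¬ ((3*(k:ℤ) - n)^2 ≤ 4*n)),
      (aa n k : ℤ) * (3*(k:ℤ) - n)^2 ≤ 2 * (n:ℤ) * 3 ^ n := by
    rw [← sumB n]
    apply Finset.sum_le_sum_of_subset_of_nonneg (Finset.filter_subset _ _)
    intro i _ _
    positivity
  have hterm : ∀ k ∈ (range (n+1)).filter (fun k : ℕ => ¬ ((3*(k:ℤ) - n)^2 ≤ 4*n)),
      (4*(n:ℤ)+1) * (aa n k : ℤ) ≤ (aa n k : ℤ) * (3*(k:ℤ) - n)^2 := by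
    intro k hk
    rw [mem_filter] at hk
    have h1 : 4*(n:ℤ) + 1 ≤ (3*(k:ℤ) - n)^2 := by omega
    have h2 : (0:ℤ) ≤ (aa n k : ℤ) := Int.natCast_nonneg _
    nlinarith
  have hout2 : (4*(n:ℤ)+1) * ∑ k ∈ (range (n+1)).filter
      (fun k : ℕ => ¬ ((3*(k:ℤ) - n)^2 ≤ 4*n)),
      (aa n k : ℤ) ≤ 2 * (n:ℤ) * 3 ^ n := by
    rw [Finset.mul_sum]
    exact le_trans (Finset.sum_le_sum hterm) houtle
  have hout3 : 2 * ∑ k ∈ (range (n+1)).filter (fun k : ℕ => ¬ ((3*(k:ℤ) - n)^2 ≤ 4*n)),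
      (aa n k : ℤ) ≤ 3 ^ n := by
    have hpos : (0:ℤ) < 4*(n:ℤ)+1 := by positivity
    have h4 : 2 * (2 * (n:ℤ) * 3 ^ n) ≤ (4*(n:ℤ)+1) * 3^n := by
      have : (0:ℤ) ≤ 3^n := by positivity
      nlinarith
    have h5 : (4*(n:ℤ)+1) * (2 * ∑ k ∈ (range (n+1)).filter
        (fun k : ℕ => ¬ ((3*(k:ℤ) - n)^2 ≤ 4*n)), (aa n k : ℤ)) ≤ (4*(n:ℤ)+1) * 3^n := by
      nlinarith [hout2]
    exact le_of_mul_le_mul_left h5 hpos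
  have hsplit : ∑ k ∈ W, (aa n k : ℤ)
      + ∑ k ∈ (range (n+1)).filter (fun k : ℕ => ¬ ((3*(k:ℤ) - n)^2 ≤ 4*n)), (aa n k : ℤ)
      = 3 ^ n := by
    rw [hW, Finset.sum_filter_add_sum_filter_not]
    rw [← Nat.cast_sum, sumA]
    push_cast
    ring
  have hWsum : (3:ℤ)^n ≤ 2 * ∑ k ∈ W, (aa n k : ℤ) := by omega
  have hWne : W.Nonempty := by
    refine ⟨n/3, ?_⟩
    rw [hW, mem_filter, mem_range]
    constructor
    · omega
    · have hr : (3*((n/3 : ℕ):ℤ) - n) = -(((n % 3 : ℕ)):ℤ) := by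
        have := Nat.div_add_mod n 3
        push_cast
        omega
      rw [hr]
      have h1 : ((n % 3 : ℕ):ℤ) ≤ 2 := by
        have := Nat.mod_lt n (show 0 < 3 by norm_num)
        omega
      have h2 : (0:ℤ) ≤ ((n % 3 : ℕ):ℤ) := Int.natCast_nonneg _
      have h3 : (1:ℤ) ≤ n := by exact_mod_cast hn
      nlinarith
  have hWcard : (W.card : ℤ) ≤ 2 * s + 1 := by
    have hinj : Set.InjOn (fun k : ℕ => 3*(k:ℤ)) W := by
      intro a _ b _ hab
      simp only at hab
      omega
    have hmaps : ∀ k ∈ W, 3*(k:ℤ) ∈ Finset.Icc ((n:ℤ) - s) ((n:ℤ) + s) := by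
      intro k hk
      rw [hW, mem_filter] at hk
      have hsq : s^2 ≤ 4*n := Nat.sqrt_le' (4*n)
      have hsq2 : 4*n < (s+1)^2 := Nat.lt_succ_sqrt' (4*n)
      have hsqZ : ((s:ℤ))^2 ≤ 4*(n:ℤ) := by exact_mod_cast hsq
      have hsq2Z : 4*(n:ℤ) < ((s:ℤ)+1)^2 := by exact_mod_cast hsq2
      have hk2 := hk.2
      rw [Finset.mem_Icc]
      constructor <;> nlinarith
    have := Finset.card_le_card_of_injOn _ hmaps hinj
    have hicc : (Finset.Icc ((n:ℤ) - s) ((n:ℤ) + s)).card = 2*s+1 := by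
      rw [Int.card_Icc]
      have : ((n:ℤ) + s + 1 - ((n:ℤ) - s)) = 2*(s:ℤ)+1 := by ring
      rw [this]
      omega
    rw [hicc] at this
    exact_mod_cast this
  obtain ⟨k, hkW, hkmax⟩ := Finset.exists_max_image W (fun k => aa n k) hWne
  refine ⟨k, ?_, ?_⟩
  · have := hkW
    rw [hW, mem_filter, mem_range] at this
    omega
  · have hsum_le : ∑ j ∈ W, (aa n j : ℤ) ≤ (W.card : ℤ) * (aa n k : ℤ) := by
      have := Finset.sum_le_card_nsmul W (fun j => (aa n j : ℤ)) ((aa n k : ℤ))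
        (fun j hj => by simpa using Int.ofNat_le.mpr (hkmax j hj))
      simpa [nsmul_eq_mul] using this
    have h2 : (0:ℤ) ≤ (aa n k : ℤ) := Int.natCast_nonneg _
    calc (3:ℤ)^n ≤ 2 * ∑ j ∈ W, (aa n j : ℤ) := hWsum
      _ ≤ 2 * ((W.card : ℤ) * (aa n k : ℤ)) := by nlinarith
      _ ≤ 2 * (2 * (s:ℤ) + 1) * (aa n k : ℤ) := by nlinarith

/-! ### Real estimates -/

lemma sqrt4n (n : ℕ) : Real.sqrt (4*(n:ℝ)) = 2 * Real.sqrt n := by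
  rw [show (4:ℝ)*(n:ℝ) = (2*Real.sqrt n)^2 by
    rw [mul_pow, Real.sq_sqrt (by positivity)]; ring]
  exact Real.sqrt_sq (by positivity)

lemma real_bound {n k : ℕ} (hn : 1 ≤ n)
    (h : (3:ℤ)^n ≤ 2 * (2 * (Nat.sqrt (4*n) : ℤ) + 1) * (aa n k : ℤ)) :
    (1/10 : ℝ) * 3^n / Real.sqrt n ≤ (aa n k : ℝ) := by
  set s : ℕ := Nat.sqrt (4*n) with hs
  have hR : (3:ℝ)^n ≤ 2 * (2 * (s:ℝ) + 1) * (aa n k : ℝ) := by exact_mod_cast h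
  have hsle : (s:ℝ) ≤ 2 * Real.sqrt n := by
    rw [← sqrt4n]
    rw [show ((s:ℝ)) = Real.sqrt ((s:ℝ)^2) by rw [Real.sqrt_sq (by positivity)]]
    apply Real.sqrt_le_sqrt
    have := Nat.sqrt_le' (4*n)
    exact_mod_cast this
  have hsq1 : (1:ℝ) ≤ Real.sqrt n := by
    rw [show (1:ℝ) = Real.sqrt 1 by simp]
    apply Real.sqrt_le_sqrt
    exact_mod_cast hn
  have hsqpos : (0:ℝ) < Real.sqrt n := by linarith
  have haapos : (0:ℝ) ≤ (aa n k : ℝ) := by positivity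
  have h10 : (3:ℝ)^n ≤ 10 * Real.sqrt n * (aa n k : ℝ) := by
    have : 2 * (2 * (s:ℝ) + 1) ≤ 10 * Real.sqrt n := by nlinarith
    nlinarith [pow_pos (show (0:ℝ) < 3 by norm_num) n]
  rw [div_le_iff₀ hsqpos]
  nlinarith

lemma four_rpow_lt : (4:ℝ) ^ (0.7924 : ℝ) < 3 := by
  have h4 : (0:ℝ) ≤ 4 := by norm_num
  by_contra hcon
  push_neg at hcon
  have h1 : (3:ℝ)^(2500:ℕ) ≤ ((4:ℝ) ^ (0.7924 : ℝ))^(2500:ℕ) :=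
    pow_le_pow_left₀ (by norm_num) hcon 2500
  have h2 : ((4:ℝ) ^ (0.7924 : ℝ))^(2500:ℕ) = (4:ℝ)^(1981:ℕ) := by
    rw [← Real.rpow_natCast ((4:ℝ) ^ (0.7924 : ℝ)) 2500, ← Real.rpow_mul h4]
    norm_num
  rw [h2] at h1
  have h3 : ((3:ℕ):ℝ)^(2500:ℕ) ≤ ((4:ℕ):ℝ)^(1981:ℕ) := by push_cast; exact_mod_cast h1
  have h4' : (3:ℕ)^2500 ≤ 4^1981 := by exact_mod_cast h3
  have : (4:ℕ)^1981 < 3^2500 := by decide +kernel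
  omega

/-! ### Main theorem -/

lemma rAP_ge (n k : ℕ) : (SS n k).card ≤ rAP 3 4 n := by
  apply le_csSup
  · exact ⟨Fintype.card (Fin n → ZMod 4), by rintro c ⟨S, -, rfl⟩; exact S.card_le_univ⟩
  · exact ⟨SS n k, progFree_SS n k, rfl⟩

theorem stmt2 :
    (∃ c : ℝ, 0 < c ∧ ∀ n : ℕ, 1 ≤ n →
      c * 3 ^ n / Real.sqrt n ≤ (rAP 3 4 n : ℝ)) ∧
    (∃ N : ℕ, ∀ n : ℕ, N ≤ n → ∃ S : Finset (Fin n → ZMod 4),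
      ProgFree 4 3 S ∧ (4 : ℝ) ^ (0.7924 * (n : ℝ)) ≤ (S.card : ℝ)) := by
  have main : ∀ n : ℕ, 1 ≤ n → ∃ k : ℕ,
      (1/10 : ℝ) * 3^n / Real.sqrt n ≤ ((SS n k).card : ℝ) := by
    intro n hn
    obtain ⟨k, -, hbig⟩ := exists_big n hn
    exact ⟨k, by rw [card_SS' n k]; exact real_bound hn hbig⟩
  constructor
  · refine ⟨1/10, by norm_num, ?_⟩
    intro n hn
    obtain ⟨k, hk⟩ := main n hn
    refine le_trans hk ?_
    exact_mod_cast rAP_ge n k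
  · -- second part
    have core : ∀ b ε : ℝ, 0 < b → 1 + ε = 3/b → 0 < ε → ∀ n : ℕ, 1 ≤ n →
        (10/ε)^2 ≤ (n:ℝ) → b^n * (10 * Real.sqrt n) ≤ 3^n := by
      intro b ε hb0 h3b hεpos n hn1 hNn
      have hsq1 : (1:ℝ) ≤ Real.sqrt n := by
        rw [show (1:ℝ) = Real.sqrt 1 by simp]
        apply Real.sqrt_le_sqrt
        exact_mod_cast hn1
      have hsqpos : (0:ℝ) < Real.sqrt n := by linarith
      have hsqN : 10/ε ≤ Real.sqrt n := by
        rw [show (10/ε : ℝ) = Real.sqrt ((10/ε)^2) by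
          rw [Real.sqrt_sq (by positivity)]]
        exact Real.sqrt_le_sqrt hNn
      have hmulself : Real.sqrt n * Real.sqrt n = (n:ℝ) := Real.mul_self_sqrt (by positivity)
      have h1 : 10 * Real.sqrt n ≤ (n:ℝ) * ε := by
        have h2 : Real.sqrt n * (10/ε) ≤ Real.sqrt n * Real.sqrt n :=
          mul_le_mul_of_nonneg_left hsqN (le_of_lt hsqpos)
        rw [hmulself] at h2
        calc 10 * Real.sqrt n = (Real.sqrt n * (10/ε)) * ε := by field_simp
          _ ≤ (n:ℝ) * ε := mul_le_mul_of_nonneg_right h2 hεpos.le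
      have hber := one_add_mul_le_pow (show (-2:ℝ) ≤ ε by linarith) n
      rw [h3b] at hber
      have hq : 10 * Real.sqrt n ≤ (3/b) ^ n := by linarith
      have hh1 : b ^ n * (10 * Real.sqrt n) ≤ b ^ n * (3/b)^n :=
        mul_le_mul_of_nonneg_left hq (by positivity)
      have hh2 : b ^ n * (3/b)^n = 3^n := by
        rw [← mul_pow]
        congr 1
        field_simp
      linarith
    have hb0 : (0:ℝ) < (4:ℝ) ^ (0.7924 : ℝ) := Real.rpow_pos_of_pos (by norm_num) _
    have hb3 : (4:ℝ) ^ (0.7924 : ℝ) < 3 := four_rpow_lt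
    have hεpos : 0 < 3/((4:ℝ) ^ (0.7924 : ℝ)) - 1 := by
      have : 1 < 3/((4:ℝ) ^ (0.7924 : ℝ)) := (one_lt_div hb0).mpr hb3
      linarith
    refine ⟨⌈(10/(3/((4:ℝ) ^ (0.7924 : ℝ)) - 1))^2⌉₊ + 1, ?_⟩
    intro n hn
    have hn1 : 1 ≤ n := le_trans (by omega) hn
    obtain ⟨k, hk⟩ := main n hn1
    refine ⟨SS n k, progFree_SS n k, le_trans ?_ hk⟩
    have hsq1 : (1:ℝ) ≤ Real.sqrt n := by
      rw [show (1:ℝ) = Real.sqrt 1 by simp]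
      apply Real.sqrt_le_sqrt
      exact_mod_cast hn1
    have hsqpos : (0:ℝ) < Real.sqrt n := by linarith
    have hbn : (4:ℝ) ^ (0.7924 * (n:ℝ)) = ((4:ℝ) ^ (0.7924 : ℝ)) ^ n := by
      rw [Real.rpow_mul (by norm_num : (0:ℝ) ≤ 4), Real.rpow_natCast]
    have hNn : (10/(3/((4:ℝ) ^ (0.7924 : ℝ)) - 1))^2 ≤ (n:ℝ) := by
      have h1 := Nat.le_ceil ((10/(3/((4:ℝ) ^ (0.7924 : ℝ)) - 1))^2)
      have h2 : (⌈(10/(3/((4:ℝ) ^ (0.7924 : ℝ)) - 1))^2⌉₊ : ℝ) ≤ (n:ℝ) := by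
        have : ⌈(10/(3/((4:ℝ) ^ (0.7924 : ℝ)) - 1))^2⌉₊ ≤ n := by omega
        exact_mod_cast this
      linarith
    have hfin := core ((4:ℝ) ^ (0.7924 : ℝ)) (3/((4:ℝ) ^ (0.7924 : ℝ)) - 1) hb0
      (by ring) hεpos n hn1 hNn
    rw [hbn, le_div_iff₀ hsqpos]
    nlinarith [pow_pos hb0 n]
end

section
/- There exist constants c, c' > 0 such that for all n ≥ 1: r_3(ℤ_4^n) ≥ c · 2.622^n and r_4(ℤ_4^n) ≥ c' · 3.363^n. -/
open Finset

/-! ### Generic helpers -/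

lemma card_le_rAP {k n : ℕ} (S : Finset (Fin n → ZMod 4)) (h : ProgFree 4 k S) :
    S.card ≤ rAP k 4 n := by
  apply le_csSup
  · refine ⟨Fintype.card (Fin n → ZMod 4), ?_⟩
    rintro c ⟨T, -, rfl⟩
    exact le_of_le_of_eq (Finset.card_le_univ T) Finset.card_univ
  · exact ⟨S, h, rfl⟩

lemma smul_cancel {n k : ℕ} (hk4 : k ≤ 4) {d : Fin n → ZMod 4} {i j : Fin k}
    (hij : i ≠ j) (h : (i : ℕ) • d = (j : ℕ) • d) : d + d = 0 := by
  have hi : ((i : ℕ) : ZMod 4) • d = ((j : ℕ) : ZMod 4) • d := by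
    rw [Nat.cast_smul_eq_nsmul, Nat.cast_smul_eq_nsmul]; exact h
  have hu0 : ((i : ℕ) : ZMod 4) - ((j : ℕ) : ZMod 4) ≠ 0 := by
    intro h0
    apply hij
    have hi4 : (i : ℕ) < 4 := lt_of_lt_of_le i.isLt hk4
    have hj4 : (j : ℕ) < 4 := lt_of_lt_of_le j.isLt hk4
    have heq : ((i : ℕ) : ZMod 4) = ((j : ℕ) : ZMod 4) := by rwa [sub_eq_zero] at h0
    have := congrArg ZMod.val heq
    rw [ZMod.val_cast_of_lt hi4, ZMod.val_cast_of_lt hj4] at this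
    exact Fin.ext this
  have husmul : (((i : ℕ) : ZMod 4) - ((j : ℕ) : ZMod 4)) • d = 0 := by
    rw [sub_smul, hi, sub_self]
  obtain ⟨w, hw⟩ : ∃ w : ZMod 4, w * (((i : ℕ) : ZMod 4) - ((j : ℕ) : ZMod 4)) = 2 := by
    revert hu0; generalize ((i : ℕ) : ZMod 4) - ((j : ℕ) : ZMod 4) = u; revert u; decide
  have h2 : (2 : ZMod 4) • d = 0 := by rw [← hw, mul_smul, husmul, smul_zero]
  rw [← two_smul (ZMod 4) d]; exact h2

lemma dd_ne {n k : ℕ} (hk : 2 < k) {x d : Fin n → ZMod 4}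
    (hinj : Function.Injective fun i : Fin k => x + (i : ℕ) • d) : d + d ≠ 0 := by
  intro h0
  have h1 : x + ((⟨0, by omega⟩ : Fin k) : ℕ) • d = x + ((⟨2, hk⟩ : Fin k) : ℕ) • d := by
    show x + (0 : ℕ) • d = x + (2 : ℕ) • d
    rw [zero_smul, two_smul, h0]
  have := hinj h1
  simp [Fin.ext_iff] at this

/-! ### Tensoring progression-free sets -/

def glue {a b : ℕ} : ((Fin a → ZMod 4) × (Fin b → ZMod 4)) ≃+ (Fin (a + b) → ZMod 4) where
  toFun p := Fin.append p.1 p.2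
  invFun v := (fun i => v (Fin.castAdd b i), fun i => v (Fin.natAdd a i))
  left_inv p := by
    cases p with
    | mk f g =>
      simp only [Prod.mk.injEq]
      constructor <;> funext i
      · exact Fin.append_left f g i
      · exact Fin.append_right f g i
  right_inv v := by
    funext i
    refine Fin.addCases (fun j => ?_) (fun j => ?_) i
    · exact Fin.append_left _ _ j
    · exact Fin.append_right _ _ j
  map_add' p q := by
    funext i
    refine Fin.addCases (fun j => ?_) (fun j => ?_) i <;>
      simp [Fin.append_left, Fin.append_right]

lemma tensor {k a b : ℕ} (hk : 2 < k) (hk4 : k ≤ 4)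
    {S : Finset (Fin a → ZMod 4)} {T : Finset (Fin b → ZMod 4)}
    (hS : ProgFree 4 k S) (hT : ProgFree 4 k T) :
    ∃ U : Finset (Fin (a + b) → ZMod 4), ProgFree 4 k U ∧ U.card = S.card * T.card := by
  refine ⟨(S ×ˢ T).map glue.toEquiv.toEmbedding, ?_,
    by rw [Finset.card_map, Finset.card_product]⟩
  rintro ⟨x, d, hinj, hmem⟩
  have hmem' : ∀ i : Fin k, glue.symm (x + (i : ℕ) • d) ∈ S ×ˢ T := by
    intro i
    have := hmem i
    rwa [Finset.mem_map_equiv] at this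
  have hcomp : ∀ i : Fin k,
      ((glue.symm x).1 + (i : ℕ) • (glue.symm d).1 ∈ S) ∧
      ((glue.symm x).2 + (i : ℕ) • (glue.symm d).2 ∈ T) := by
    intro i
    have h := hmem' i
    rw [map_add, map_nsmul, Finset.mem_product] at h
    exact h
  have hdd : d + d ≠ 0 := dd_ne hk hinj
  have hDD : ¬((glue.symm d).1 + (glue.symm d).1 = 0 ∧
      (glue.symm d).2 + (glue.symm d).2 = 0) := by
    rintro ⟨h1, h2⟩
    apply hdd
    have hD0 : glue.symm d + glue.symm d = 0 := by
      rw [Prod.ext_iff]; exact ⟨h1, h2⟩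
    have hd : d = glue (glue.symm d) := (glue.apply_symm_apply d).symm
    rw [hd, ← map_add, hD0, map_zero]
  rcases not_and_or.mp hDD with h | h
  · apply hS
    refine ⟨(glue.symm x).1, (glue.symm d).1, ?_, fun i => (hcomp i).1⟩
    intro i j hij
    by_contra hne
    exact h (smul_cancel hk4 hne (add_left_cancel hij))
  · apply hT
    refine ⟨(glue.symm x).2, (glue.symm d).2, ?_, fun i => (hcomp i).2⟩
    intro i j hij
    by_contra hne
    exact h (smul_cancel hk4 hne (add_left_cancel hij))

/-! ### The alphabet-`{0,1,2}` sets -/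

def piA (n : ℕ) : Finset (Fin n → ZMod 4) :=
  Fintype.piFinset (fun _ => ({0,1,2} : Finset (ZMod 4)))

lemma card_piA (n : ℕ) : (piA n).card = 3 ^ n := by
  rw [piA, Fintype.card_piFinset_const,
    show ({0,1,2} : Finset (ZMod 4)).card = 3 from rfl]

lemma g3 : ∀ a b : ZMod 4, b + b ≠ 0 → a ∈ ({0,1,2} : Finset (ZMod 4)) →
    a + b ∈ ({0,1,2} : Finset (ZMod 4)) → a + (b + b) ∈ ({0,1,2} : Finset (ZMod 4)) →
    a + (b + (b + b)) ∈ ({0,1,2} : Finset (ZMod 4)) → False := by decide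

lemma freeA3 (m : ℕ) : ProgFree 4 4 (piA m) := by
  rintro ⟨x, d, hinj, hmem⟩
  have m0 : x ∈ piA m := by
    have h := hmem ⟨0, by omega⟩
    rwa [show ((⟨0, by omega⟩ : Fin 4) : ℕ) = 0 from rfl, zero_smul, add_zero] at h
  have m1 : x + d ∈ piA m := by
    have h := hmem ⟨1, by omega⟩
    rwa [show ((⟨1, by omega⟩ : Fin 4) : ℕ) = 1 from rfl, one_smul] at h
  have m2 : x + (d + d) ∈ piA m := by
    have h := hmem ⟨2, by omega⟩
    rwa [show ((⟨2, by omega⟩ : Fin 4) : ℕ) = 2 from rfl, two_smul] at h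
  have m3 : x + (d + (d + d)) ∈ piA m := by
    have h := hmem ⟨3, by omega⟩
    rwa [show ((⟨3, by omega⟩ : Fin 4) : ℕ) = 3 from rfl,
      show (3 : ℕ) = 1 + 2 from rfl, add_smul, one_smul, two_smul] at h
  rw [piA, Fintype.mem_piFinset] at m0 m1 m2 m3
  have hdd : d + d ≠ 0 := dd_ne (by omega) hinj
  obtain ⟨i, hi⟩ := Function.ne_iff.mp hdd
  exact g3 (x i) (d i) hi (m0 i) (m1 i) (m2 i) (m3 i)

/-! ### The 128-element 4-AP-free set in `(ℤ/4)⁴` -/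

def pr : ZMod 4 → ZMod 2 := fun a => if a = 0 ∨ a = 2 then 0 else 1
def fb : ZMod 4 → ZMod 2 := fun a => if a = 2 ∨ a = 3 then 1 else 0
def psi (u : Fin 4 → ZMod 2) : Fin 4 → ZMod 2 :=
  if u 1 = 0 then
    (if u 2 = 0 then (if u 3 = 0 then ![1,0,0,0] else ![1,1,1,1])
     else (if u 3 = 0 then ![1,1,1,0] else ![1,1,0,1]))
  else
    (if u 2 = 0 then (if u 3 = 0 then ![1,1,0,0] else ![1,0,0,1])
     else (if u 3 = 0 then ![1,0,1,1] else ![1,0,1,0]))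
def Phi (u w : Fin 4 → ZMod 2) : ZMod 2 := ∑ j, psi u j * w j
def S4 : Finset (Fin 4 → ZMod 4) := univ.filter (fun v => Phi (pr ∘ v) (fb ∘ v) = 0)

set_option maxRecDepth 10000 in
lemma key1 : ∀ u d : Fin 4 → ZMod 2, d ≠ 0 → Phi u d = 1 ∨ Phi (u + d) d = 1 := by decide

set_option maxRecDepth 40000 in
lemma card4 : S4.card = 128 := by decide

lemma pf1 : ∀ a b : ZMod 4, fb (a + (b + b)) = fb a + pr b := by decide
lemma pf2 : ∀ a b : ZMod 4, pr (a + b) = pr a + pr b := by decide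
lemma pf3 : ∀ b : ZMod 4, b + b = 0 ↔ pr b = 0 := by decide
lemma pfz : ∀ a : ZMod 2, a + a = 0 := by decide

lemma Phi_add (u w w' : Fin 4 → ZMod 2) : Phi u (w + w') = Phi u w + Phi u w' := by
  simp [Phi, mul_add, Finset.sum_add_distrib]

lemma free4 : ProgFree 4 4 S4 := by
  rintro ⟨x, d, hinj, hmem⟩
  have m0 : x ∈ S4 := by
    have h := hmem ⟨0, by omega⟩
    rwa [show ((⟨0, by omega⟩ : Fin 4) : ℕ) = 0 from rfl, zero_smul, add_zero] at h
  have m1 : x + d ∈ S4 := by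
    have h := hmem ⟨1, by omega⟩
    rwa [show ((⟨1, by omega⟩ : Fin 4) : ℕ) = 1 from rfl, one_smul] at h
  have m2 : x + (d + d) ∈ S4 := by
    have h := hmem ⟨2, by omega⟩
    rwa [show ((⟨2, by omega⟩ : Fin 4) : ℕ) = 2 from rfl, two_smul] at h
  have m3 : (x + d) + (d + d) ∈ S4 := by
    have h := hmem ⟨3, by omega⟩
    rw [show ((⟨3, by omega⟩ : Fin 4) : ℕ) = 3 from rfl,
      show (3 : ℕ) = 1 + 2 from rfl, add_smul, one_smul, two_smul, ← add_assoc] at h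
    exact h
  rw [S4, Finset.mem_filter] at m0 m1 m2 m3
  have hdd : d + d ≠ 0 := dd_ne (by omega) hinj
  have hpd : pr ∘ d ≠ 0 := fun h0 =>
    hdd (funext fun i => (pf3 (d i)).mpr (congrFun h0 i))
  have hpar1 : pr ∘ (x + d) = pr ∘ x + pr ∘ d := funext fun i => pf2 (x i) (d i)
  have hpar2 : pr ∘ (x + (d + d)) = pr ∘ x := by
    funext i
    show pr (x i + (d i + d i)) = pr (x i)
    rw [pf2, pf2, pfz, add_zero]
  have hpar3 : pr ∘ ((x + d) + (d + d)) = pr ∘ (x + d) := by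
    funext i
    show pr ((x + d) i + (d i + d i)) = pr ((x + d) i)
    rw [pf2, pf2, pfz, add_zero]
  have hfib2 : fb ∘ (x + (d + d)) = fb ∘ x + pr ∘ d := funext fun i => pf1 (x i) (d i)
  have hfib3 : fb ∘ ((x + d) + (d + d)) = fb ∘ (x + d) + pr ∘ d :=
    funext fun i => pf1 ((x + d) i) (d i)
  have e0 : Phi (pr ∘ x) (pr ∘ d) = 0 := by
    have h2 := m2.2
    rw [hpar2, hfib2, Phi_add, m0.2, zero_add] at h2
    exact h2
  have e1 : Phi (pr ∘ x + pr ∘ d) (pr ∘ d) = 0 := by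
    have h3 := m3.2
    rw [hpar3, hfib3, Phi_add, m1.2, zero_add, hpar1] at h3
    exact h3
  rcases key1 (pr ∘ x) (pr ∘ d) hpd with h | h
  · rw [e0] at h; exact absurd h (by decide)
  · rw [e1] at h; exact absurd h (by decide)

/-! ### Building 4-AP-free sets in every dimension -/

lemma castPF {k c A A' : ℕ} (h : A = A')
    (H : ∃ S : Finset (Fin A → ZMod 4), ProgFree 4 k S ∧ c ≤ S.card) :
    ∃ S : Finset (Fin A' → ZMod 4), ProgFree 4 k S ∧ c ≤ S.card := by
  subst h; exact H

lemma buildup : ∀ m r : ℕ,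
    ∃ S : Finset (Fin (4 * m + r) → ZMod 4), ProgFree 4 4 S ∧ 128 ^ m * 3 ^ r ≤ S.card := by
  intro m
  induction m with
  | zero =>
    intro r
    refine ⟨piA (4 * 0 + r), freeA3 _, ?_⟩
    rw [card_piA, pow_zero, one_mul, Nat.mul_zero, Nat.zero_add]
  | succ p ih =>
    intro r
    obtain ⟨S, hS, hc⟩ := ih r
    obtain ⟨U, hU, hcard⟩ := tensor (by omega) (by omega) hS free4
    refine castPF (by ring) ⟨U, hU, ?_⟩
    rw [hcard, card4]
    calc 128 ^ (p + 1) * 3 ^ r = (128 ^ p * 3 ^ r) * 128 := by ring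
      _ ≤ S.card * 128 := Nat.mul_le_mul_right _ hc

/-! ### The mod-(n+1) weighted Elsholtz–Pach sets (3-AP-free) -/

def wt {n : ℕ} (v : Fin n → ZMod 4) : ℕ := (univ.filter (fun i => v i = 1)).card

def S3 (n r : ℕ) : Finset (Fin n → ZMod 4) := (piA n).filter (fun v => wt v % (n + 1) = r)

lemma g1 : ∀ a b : ZMod 4, a ∈ ({0,1,2} : Finset (ZMod 4)) →
    a + b ∈ ({0,1,2} : Finset (ZMod 4)) → a + (b + b) ∈ ({0,1,2} : Finset (ZMod 4)) →
    ((a + b = 1) ↔ (a = 1 ∨ b + b ≠ 0)) := by decide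
lemma g2 : ∀ a b : ZMod 4, a ∈ ({0,1,2} : Finset (ZMod 4)) →
    a + b ∈ ({0,1,2} : Finset (ZMod 4)) → a + (b + b) ∈ ({0,1,2} : Finset (ZMod 4)) →
    ¬(a = 1 ∧ b + b ≠ 0) := by decide

lemma free3 (n r : ℕ) : ProgFree 4 3 (S3 n r) := by
  rintro ⟨x, d, hinj, hmem⟩
  have m0 : x ∈ S3 n r := by
    have h := hmem ⟨0, by omega⟩
    rwa [show ((⟨0, by omega⟩ : Fin 3) : ℕ) = 0 from rfl, zero_smul, add_zero] at h
  have m1 : x + d ∈ S3 n r := by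
    have h := hmem ⟨1, by omega⟩
    rwa [show ((⟨1, by omega⟩ : Fin 3) : ℕ) = 1 from rfl, one_smul] at h
  have m2 : x + (d + d) ∈ S3 n r := by
    have h := hmem ⟨2, by omega⟩
    rwa [show ((⟨2, by omega⟩ : Fin 3) : ℕ) = 2 from rfl, two_smul] at h
  rw [S3, Finset.mem_filter, piA, Fintype.mem_piFinset] at m0 m1 m2
  have hx := m0.1
  have hx1 := m1.1
  have hx2 := m2.1
  have hsets : univ.filter (fun i => (x + d) i = 1) =
      univ.filter (fun i => x i = 1) ∪ univ.filter (fun i => d i + d i ≠ 0) := by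
    ext i
    simp only [mem_filter, mem_union, mem_univ, true_and]
    exact g1 (x i) (d i) (hx i) (hx1 i) (hx2 i)
  have hdisj : Disjoint (univ.filter (fun i => x i = 1))
      (univ.filter (fun i => d i + d i ≠ 0)) := by
    rw [Finset.disjoint_left]
    intro i hi1 hi2
    simp only [mem_filter, mem_univ, true_and] at hi1 hi2
    exact g2 (x i) (d i) (hx i) (hx1 i) (hx2 i) ⟨hi1, hi2⟩
  have hwt : wt (x + d) = wt x + (univ.filter (fun i => d i + d i ≠ 0)).card := by
    rw [wt, hsets, Finset.card_union_of_disjoint hdisj, wt]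
  have hdvd : (n + 1) ∣ (univ.filter (fun i => d i + d i ≠ 0)).card := by
    have hmod : wt x % (n + 1)
        = (wt x + (univ.filter (fun i => d i + d i ≠ 0)).card) % (n + 1) := by
      rw [← hwt, m1.2, m0.2]
    have hme : Nat.ModEq (n + 1) (wt x)
        (wt x + (univ.filter (fun i => d i + d i ≠ 0)).card) := hmod
    have := (Nat.modEq_iff_dvd' (Nat.le_add_right _ _)).mp hme
    simpa using this
  have hle : (univ.filter (fun i => d i + d i ≠ 0)).card < n + 1 := by
    have : (univ.filter (fun i => d i + d i ≠ 0)).card ≤ (univ : Finset (Fin n)).card :=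
      Finset.card_filter_le _ _
    rw [Finset.card_univ, Fintype.card_fin] at this
    omega
  have hzero := Nat.eq_zero_of_dvd_of_lt hdvd hle
  have hd0 : d + d = 0 := by
    rw [Finset.card_eq_zero, Finset.filter_eq_empty_iff] at hzero
    funext i
    have := hzero (Finset.mem_univ i)
    simpa using this
  exact dd_ne (by omega) hinj hd0

lemma exists_S3 (n : ℕ) : ∃ r, 3 ^ n / (n + 1) ≤ (S3 n r).card := by
  obtain ⟨r, _, hcard⟩ := Finset.exists_le_card_fiber_of_mul_le_card_of_maps_to
    (s := piA n) (t := Finset.range (n + 1)) (f := fun v => wt v % (n + 1))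
    (fun v _ => Finset.mem_range.mpr (Nat.mod_lt _ n.succ_pos))
    ⟨0, Finset.mem_range.mpr n.succ_pos⟩
    (by
      rw [Finset.card_range, card_piA]
      calc (n + 1) * (3 ^ n / (n + 1)) = 3 ^ n / (n + 1) * (n + 1) := mul_comm _ _
        _ ≤ 3 ^ n := Nat.div_mul_le_self _ _)
  exact ⟨r, hcard⟩

/-! ### Numerics -/

lemma two_n_le_three_pow : ∀ n : ℕ, 2 * n ≤ 3 ^ n := by
  intro n
  induction n with
  | zero => simp
  | succ k ih =>
    have h1 : 1 ≤ 3 ^ k := Nat.one_le_pow _ _ (by norm_num)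
    have h2 : 3 ^ (k + 1) = 3 * 3 ^ k := by rw [pow_succ]; ring
    omega

lemma num3 (n : ℕ) : (1/20 : ℝ) * 2.622 ^ n ≤ ((3 ^ n / (n + 1) : ℕ) : ℝ) := by
  set q : ℕ := 3 ^ n / (n + 1) with hqdef
  have hdm : (n + 1) * q + 3 ^ n % (n + 1) = 3 ^ n := Nat.div_add_mod _ _
  have hmodle : 3 ^ n % (n + 1) ≤ n := Nat.le_of_lt_succ (Nat.mod_lt _ n.succ_pos)
  have hdmR : ((n : ℝ) + 1) * (q : ℝ) + ((3 ^ n % (n + 1) : ℕ) : ℝ) = 3 ^ n := by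
    exact_mod_cast hdm
  have hmodR : ((3 ^ n % (n + 1) : ℕ) : ℝ) ≤ (n : ℝ) := by exact_mod_cast hmodle
  have hb : (1 : ℝ) + 0.144 * n ≤ 1.144 ^ n := by
    have := one_add_mul_le_pow (a := (0.144 : ℝ)) (by norm_num) n
    have h2 : ((1 : ℝ) + 0.144) ^ n = 1.144 ^ n := by norm_num
    rw [h2] at this
    linarith
  have hc : (1.144 : ℝ) ^ n * 2.622 ^ n ≤ 3 ^ n := by
    rw [← mul_pow]
    exact pow_le_pow_left₀ (by norm_num) (by norm_num) n
  have hn3 : (n : ℝ) ≤ (1/2) * 3 ^ n := by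
    have h := two_n_le_three_pow n
    have h' : (2 * n : ℝ) ≤ 3 ^ n := by exact_mod_cast h
    linarith
  have hpow : (0 : ℝ) ≤ 2.622 ^ n := by positivity
  have hmain : (1/20 : ℝ) * 2.622 ^ n * ((n : ℝ) + 1) + n ≤ 3 ^ n := by
    have s1 : (1/20 : ℝ) * 2.622 ^ n * ((n : ℝ) + 1)
        ≤ (1/2) * 2.622 ^ n * (1 + 0.144 * n) := by nlinarith
    have s2 : (1/2 : ℝ) * 2.622 ^ n * (1 + 0.144 * n) ≤ (1/2) * 2.622 ^ n * 1.144 ^ n := by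
      nlinarith
    have s3 : (1/2 : ℝ) * 2.622 ^ n * 1.144 ^ n ≤ (1/2) * 3 ^ n := by nlinarith
    linarith
  have hq1 : (1/20 : ℝ) * 2.622 ^ n * ((n : ℝ) + 1) ≤ ((n : ℝ) + 1) * q := by linarith
  have hpos : (0 : ℝ) < (n : ℝ) + 1 := by positivity
  nlinarith

lemma num4 (m r : ℕ) (hr : r < 4) :
    (1/2 : ℝ) * 3.363 ^ (4 * m + r) ≤ ((128 ^ m * 3 ^ r : ℕ) : ℝ) := by
  push_cast
  have h1 : ((3.363 : ℝ) ^ 4) ^ m ≤ 128 ^ m :=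
    pow_le_pow_left₀ (by positivity) (by norm_num) m
  have h2 : (1/2 : ℝ) * 3.363 ^ r ≤ 3 ^ r := by
    interval_cases r <;> norm_num
  have h3 : (3.363 : ℝ) ^ (4 * m + r) = ((3.363 : ℝ) ^ 4) ^ m * 3.363 ^ r := by
    rw [pow_add, pow_mul]
  rw [h3]
  calc (1/2 : ℝ) * (((3.363 : ℝ) ^ 4) ^ m * 3.363 ^ r)
      = ((3.363 : ℝ) ^ 4) ^ m * ((1/2) * 3.363 ^ r) := by ring
    _ ≤ 128 ^ m * 3 ^ r := by
        apply mul_le_mul h1 h2 (by positivity) (by positivity)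

/-! ### Main theorem -/

theorem stmt6 :
    ∃ c c' : ℝ, 0 < c ∧ 0 < c' ∧ ∀ n : ℕ, 1 ≤ n →
      c * 2.622 ^ n ≤ (rAP 3 4 n : ℝ) ∧ c' * 3.363 ^ n ≤ (rAP 4 4 n : ℝ) := by
  refine ⟨1/20, 1/2, by norm_num, by norm_num, fun n _ => ⟨?_, ?_⟩⟩
  · -- k = 3
    obtain ⟨r, hcard⟩ := exists_S3 n
    have hle : (S3 n r).card ≤ rAP 3 4 n := card_le_rAP _ (free3 n r)
    have : (3 ^ n / (n + 1) : ℕ) ≤ rAP 3 4 n := le_trans hcard hle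
    calc (1/20 : ℝ) * 2.622 ^ n ≤ ((3 ^ n / (n + 1) : ℕ) : ℝ) := num3 n
      _ ≤ (rAP 3 4 n : ℝ) := by exact_mod_cast this
  · -- k = 4
    have hn : 4 * (n / 4) + n % 4 = n := Nat.div_add_mod n 4
    obtain ⟨S, hS, hcard⟩ := castPF hn (buildup (n / 4) (n % 4))
    have hle : S.card ≤ rAP 4 4 n := card_le_rAP _ hS
    have hch : (128 ^ (n / 4) * 3 ^ (n % 4) : ℕ) ≤ rAP 4 4 n := le_trans hcard hle
    calc (1/2 : ℝ) * 3.363 ^ n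
        = (1/2 : ℝ) * 3.363 ^ (4 * (n / 4) + n % 4) := by rw [hn]
      _ ≤ ((128 ^ (n / 4) * 3 ^ (n % 4) : ℕ) : ℝ) := num4 _ _ (Nat.mod_lt _ (by norm_num))
      _ ≤ (rAP 4 4 n : ℝ) := by exact_mod_cast hch
end

section
/- Let m ≥ 5 be an odd integer. There exists a constant C_m > 0 such that for all n ≥ 1: r_3(ℤ_m^n) ≥ (C_m / √n) · ((m+1)/2)^n. -/
open Finset

namespace Stmt8Aux

variable (q : ℕ)

def sig : ℤ := ∑ b ∈ Finset.range q, (b : ℤ)^2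

def f (a : ℕ) : ℤ := (q : ℤ) * (a : ℤ)^2 - sig q

def V : ℤ := ∑ a ∈ Finset.range q, (f q a)^2

lemma sum_f_fin : ∑ a : Fin q, f q (a : ℕ) = 0 := by
  rw [Fin.sum_univ_eq_sum_range fun a => f q a]
  simp only [f, Finset.sum_sub_distrib, Finset.sum_const, Finset.card_range, ← Finset.mul_sum,
    sig, nsmul_eq_mul]
  ring

lemma V_fin : ∑ a : Fin q, (f q (a : ℕ))^2 = V q :=
  Fin.sum_univ_eq_sum_range (fun a => (f q a)^2) q

lemma V_pos (hq : 2 ≤ q) : 0 < V q := by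
  have h1 : (1:ℕ) ∈ Finset.range q := by simp; omega
  have hσ : (1:ℤ) ≤ sig q := by
    have := Finset.single_le_sum (f := fun b : ℕ => (b:ℤ)^2) (fun b _ => sq_nonneg _) h1
    simpa [sig] using this
  have h0 : (0:ℕ) ∈ Finset.range q := by simp; omega
  have : (f q 0)^2 ≤ V q :=
    Finset.single_le_sum (f := fun a : ℕ => (f q a)^2) (fun b _ => sq_nonneg _) h0
  have : (sig q)^2 ≤ V q := by simpa [f] using this
  nlinarith

def F {n : ℕ} (x : Fin n → Fin q) : ℤ := ∑ i, f q (x i)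

lemma F_cons {n : ℕ} (a : Fin q) (y : Fin n → Fin q) :
    F q (Fin.cons a y) = f q a + F q y := by
  simp [F, Fin.sum_univ_succ]

lemma sum_pi_succ {n : ℕ} (g : (Fin (n+1) → Fin q) → ℤ) :
    ∑ x : Fin (n+1) → Fin q, g x = ∑ a : Fin q, ∑ y : Fin n → Fin q, g (Fin.cons a y) := by
  rw [← Equiv.sum_comp (Fin.consEquiv fun _ => Fin q) g, Fintype.sum_prod_type]
  rfl

lemma card_pi (n : ℕ) : Fintype.card (Fin n → Fin q) = q ^ n := by
  simp [Fintype.card_fun]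

lemma moment (n : ℕ) :
    (q:ℤ) * ∑ x : Fin n → Fin q, (F q x)^2 = n * V q * (q:ℤ)^n := by
  induction n with
  | zero => simp [F]
  | succ n ih =>
    rw [sum_pi_succ]
    have h1 : ∀ a : Fin q, ∑ y : Fin n → Fin q, (F q (Fin.cons a y))^2
        = (q:ℤ)^n * (f q (a:ℕ))^2 + 2 * f q (a:ℕ) * (∑ y : Fin n → Fin q, F q y)
          + ∑ y : Fin n → Fin q, (F q y)^2 := by
      intro a
      calc ∑ y : Fin n → Fin q, (F q (Fin.cons a y))^2
          = ∑ y : Fin n → Fin q, ((f q (a:ℕ))^2 + 2 * f q (a:ℕ) * F q y + (F q y)^2) :=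
            Finset.sum_congr rfl fun y _ => by rw [F_cons]; ring
        _ = _ := by
            rw [Finset.sum_add_distrib, Finset.sum_add_distrib, Finset.sum_const,
              ← Finset.mul_sum]
            simp [card_univ, card_pi, nsmul_eq_mul]
    rw [Finset.sum_congr rfl fun a _ => h1 a]
    rw [Finset.sum_add_distrib, Finset.sum_add_distrib, Finset.sum_const, ← Finset.mul_sum,
      ← Finset.sum_mul, ← Finset.mul_sum]
    rw [V_fin, sum_f_fin]
    simp only [card_univ, card_pi, Fintype.card_fin, nsmul_eq_mul]
    push_cast
    linear_combination (q:ℤ) * ih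

def key {n : ℕ} (x : Fin n → Fin q) : ℕ := ∑ i, ((x i : ℕ))^2

lemma F_eq {n : ℕ} (x : Fin n → Fin q) :
    F q x = (q:ℤ) * (key q x) - n * sig q := by
  simp only [F, f, key, Finset.sum_sub_distrib, Finset.sum_const, card_univ, Fintype.card_fin,
    ← Finset.mul_sum, nsmul_eq_mul]
  push_cast
  ring

lemma main_count (hq : 2 ≤ q) {n : ℕ} (hn : 1 ≤ n) :
    ∃ s : ℕ, q ^ n ≤ 4 * (Nat.sqrt (2 * n * (V q).toNat) + 1) *
      (Finset.univ.filter fun x : Fin n → Fin q => key q x = s).card := by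
  classical
  set t : ℕ := Nat.sqrt (2 * n * (V q).toNat) + 1 with ht
  have hV := V_pos q hq
  set Good : Finset (Fin n → Fin q) :=
    Finset.univ.filter (fun x => (F q x)^2 < (t:ℤ)^2) with hGood
  set Bad : Finset (Fin n → Fin q) :=
    Finset.univ.filter (fun x => ¬ (F q x)^2 < (t:ℤ)^2) with hBad
  have hsplit : Good.card + Bad.card = q ^ n := by
    rw [hGood, hBad, Finset.card_filter_add_card_filter_not, card_univ, card_pi]
  have ht2 : 2 * (n:ℤ) * V q + 1 ≤ (t:ℤ)^2 := by
    have h1 : 2 * n * (V q).toNat < t * t := Nat.lt_succ_sqrt _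
    have h2 : ((V q).toNat : ℤ) = V q := Int.toNat_of_nonneg hV.le
    have : (2 * n * (V q).toNat : ℤ) < (t:ℤ) * t := by exact_mod_cast h1
    push_cast at this ⊢
    nlinarith [this]
  have hcheb : (Bad.card : ℤ) * (t:ℤ)^2 ≤ ∑ x : Fin n → Fin q, (F q x)^2 := by
    calc (Bad.card : ℤ) * (t:ℤ)^2 = ∑ _x ∈ Bad, (t:ℤ)^2 := by
          rw [Finset.sum_const, nsmul_eq_mul]
      _ ≤ ∑ x ∈ Bad, (F q x)^2 := Finset.sum_le_sum (fun x hx => by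
          simp only [hBad, Finset.mem_filter, not_lt] at hx; exact hx.2)
      _ ≤ ∑ x : Fin n → Fin q, (F q x)^2 :=
          Finset.sum_le_sum_of_subset_of_nonneg (Finset.subset_univ _)
            (fun x _ _ => sq_nonneg _)
  have hBad2 : 2 * Bad.card ≤ q ^ n := by
    have h3 : (q:ℤ) * ((Bad.card : ℤ) * (t:ℤ)^2) ≤ n * V q * (q:ℤ)^n := by
      rw [← moment]
      have hq0 : (0:ℤ) ≤ q := by positivity
      exact mul_le_mul_of_nonneg_left hcheb hq0
    have hq1 : (1:ℤ) ≤ q := by exact_mod_cast le_trans (by norm_num) hq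
    have hn1 : (1:ℤ) ≤ n := by exact_mod_cast hn
    have hqn : (0:ℤ) ≤ (q:ℤ)^n := by positivity
    have hBc : (0:ℤ) ≤ (Bad.card : ℤ) := by positivity
    have hA : (Bad.card : ℤ) * (t:ℤ)^2 ≤ n * V q * (q:ℤ)^n := by
      nlinarith [mul_nonneg hBc (sq_nonneg (t:ℤ))]
    have h4 : (Bad.card : ℤ) * (2 * n * V q + 1) ≤ n * V q * (q:ℤ)^n :=
      le_trans (mul_le_mul_of_nonneg_left ht2 hBc) hA
    have hnV : (0:ℤ) < n * V q := by nlinarith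
    have key2 : 2 * (Bad.card : ℤ) ≤ (q:ℤ)^n := by
      by_contra hcon
      push_neg at hcon
      have h5 := mul_lt_mul_of_pos_left hcon hnV
      nlinarith [h4, h5, hBc]
    exact_mod_cast key2
  have hGood2 : q ^ n ≤ 2 * Good.card := by omega
  have hGoodne : Good.Nonempty := by
    rw [← Finset.card_pos]
    have : 0 < q ^ n := by positivity
    omega
  set K : Finset ℕ := Good.image (key q) with hK
  have hKcard : K.card ≤ 2 * t := by
    have hsub : K.card ≤ (Finset.Ioo (-(t:ℤ)) (t:ℤ)).card := by
      refine Finset.card_le_card_of_injOn (fun s : ℕ => (q:ℤ) * s - n * sig q) ?_ ?_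
      · intro s hs
        obtain ⟨x, hx, hxs⟩ := Finset.mem_image.1 hs
        rw [hGood, Finset.mem_filter] at hx
        have hF := hx.2
        rw [F_eq, hxs] at hF
        rw [Finset.mem_coe, Finset.mem_Ioo]
        have ht0 : (0:ℤ) ≤ (t:ℤ) := by positivity
        constructor
        · show -(t:ℤ) < (q:ℤ) * s - n * sig q
          nlinarith [hF, ht0]
        · show (q:ℤ) * s - n * sig q < (t:ℤ)
          nlinarith [hF, ht0]
      · intro s1 _ s2 _ hss
        simp only at hss
        have : (q:ℤ) * s1 = (q:ℤ) * s2 := by linarith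
        have hq0 : (q:ℤ) ≠ 0 := by positivity
        have := mul_left_cancel₀ hq0 this
        exact_mod_cast this
    rw [Int.card_Ioo] at hsub
    omega
  have hGK : ∀ x ∈ Good, key q x ∈ K := fun x hx => Finset.mem_image_of_mem _ hx
  obtain ⟨s, hsK, hmax⟩ := Finset.exists_max_image K
    (fun s => (Good.filter (fun x => key q x = s)).card) (hGoodne.image _)
  refine ⟨s, ?_⟩
  have hsum := Finset.card_eq_sum_card_fiberwise hGK
  have hle : Good.card ≤ K.card * (Good.filter (fun x => key q x = s)).card := by
    rw [hsum]
    calc ∑ b ∈ K, (Good.filter (fun x => key q x = b)).card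
        ≤ K.card • (Good.filter (fun x => key q x = s)).card :=
          Finset.sum_le_card_nsmul _ _ _ (fun b hb => hmax b hb)
      _ = _ := by rw [smul_eq_mul]
  have hfib : (Good.filter (fun x => key q x = s)).card ≤
      (Finset.univ.filter fun x : Fin n → Fin q => key q x = s).card := by
    apply Finset.card_le_card
    intro x hx
    rw [Finset.mem_filter] at hx ⊢
    exact ⟨Finset.mem_univ _, hx.2⟩
  calc q ^ n ≤ 2 * Good.card := hGood2
    _ ≤ 2 * (K.card * (Good.filter (fun x => key q x = s)).card) := by omega
    _ ≤ 2 * ((2 * t) * (Finset.univ.filter fun x : Fin n → Fin q => key q x = s).card) := by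
        have := Nat.mul_le_mul hKcard hfib
        omega
    _ = 4 * t * _ := by ring

lemma progfree (m : ℕ) (hm : 5 ≤ m) (h2q : 2 * q = m + 1) (n s : ℕ) :
    ProgFree m 3 ((Finset.univ.filter fun x : Fin n → Fin q => key q x = s).image
      (fun x i => ((x i : ℕ) : ZMod m))) := by
  haveI : NeZero m := ⟨by omega⟩
  rintro ⟨x, d, hinj, hmem⟩
  obtain ⟨a0, ha0, he0⟩ := Finset.mem_image.1 (hmem 0)
  obtain ⟨a1, ha1, he1⟩ := Finset.mem_image.1 (hmem 1)
  obtain ⟨a2, ha2, he2⟩ := Finset.mem_image.1 (hmem 2)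
  rw [Finset.mem_filter] at ha0 ha1 ha2
  have hAP : (fun i => ((a0 i : ℕ) : ZMod m)) + (fun i => ((a2 i : ℕ) : ZMod m))
      = (fun i => ((a1 i : ℕ) : ZMod m)) + (fun i => ((a1 i : ℕ) : ZMod m)) := by
    rw [he0, he1, he2]
    have h0 : ((0 : Fin 3) : ℕ) = 0 := rfl
    have h1v : ((1 : Fin 3) : ℕ) = 1 := rfl
    have h2v : ((2 : Fin 3) : ℕ) = 2 := rfl
    rw [h0, h1v, h2v]
    module
  have hcoord : ∀ i, (a0 i : ℕ) + (a2 i : ℕ) = 2 * (a1 i : ℕ) := by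
    intro i
    have hco := congrFun hAP i
    simp only [Pi.add_apply] at hco
    have hcast : (((a0 i : ℕ) + (a2 i : ℕ) : ℕ) : ZMod m) = ((2 * (a1 i : ℕ) : ℕ) : ZMod m) := by
      push_cast
      rw [hco]; ring
    have hb0 : (a0 i : ℕ) + (a2 i : ℕ) < m := by
      have := (a0 i).isLt; have := (a2 i).isLt; omega
    have hb1 : 2 * (a1 i : ℕ) < m := by have := (a1 i).isLt; omega
    have := congrArg ZMod.val hcast
    rwa [ZMod.val_cast_of_lt hb0, ZMod.val_cast_of_lt hb1] at this
  have hk0 : (∑ i, ((a0 i : ℤ))^2) = (s : ℤ) := by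
    rw [← ha0.2]; unfold key; push_cast; rfl
  have hk1 : (∑ i, ((a1 i : ℤ))^2) = (s : ℤ) := by
    rw [← ha1.2]; unfold key; push_cast; rfl
  have hk2 : (∑ i, ((a2 i : ℤ))^2) = (s : ℤ) := by
    rw [← ha2.2]; unfold key; push_cast; rfl
  have hsq : ∑ i, ((a0 i : ℤ) - (a2 i : ℤ))^2 = 0 := by
    have hterm : ∀ i : Fin n, ((a0 i : ℤ) - (a2 i : ℤ))^2
        = 2 * (a0 i : ℤ)^2 + 2 * (a2 i : ℤ)^2 - 4 * (a1 i : ℤ)^2 := by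
      intro i
      have hc : ((a0 i : ℕ) : ℤ) + ((a2 i : ℕ) : ℤ) = 2 * ((a1 i : ℕ) : ℤ) := by
        exact_mod_cast congrArg (Nat.cast : ℕ → ℤ) (hcoord i)
      nlinarith [hc]
    rw [Finset.sum_congr rfl fun i _ => hterm i]
    rw [Finset.sum_sub_distrib, Finset.sum_add_distrib, ← Finset.mul_sum, ← Finset.mul_sum,
      ← Finset.mul_sum, hk0, hk1, hk2]
    ring
  have ha02 : a0 = a2 := by
    funext i
    have := (Finset.sum_eq_zero_iff_of_nonneg (fun i _ => sq_nonneg _)).1 hsq i (Finset.mem_univ i)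
    have hz : (a0 i : ℤ) - (a2 i : ℤ) = 0 := by
      exact pow_eq_zero_iff (by norm_num) |>.1 this
    have : ((a0 i : ℕ) : ℤ) = ((a2 i : ℕ) : ℤ) := by linarith
    exact Fin.ext (by exact_mod_cast this)
  have hpt : (fun i : Fin 3 => x + (i : ℕ) • d) 0 = (fun i : Fin 3 => x + (i : ℕ) • d) 2 := by
    simp only
    rw [← he0, ← he2, ha02]
  exact absurd (hinj hpt) (by decide)

end Stmt8Aux

theorem stmt8 (m : ℕ) (hm : 5 ≤ m) (hodd : Odd m) :
    ∃ C : ℝ, 0 < C ∧ ∀ n : ℕ, 1 ≤ n →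
      C / Real.sqrt n * (((m : ℝ) + 1) / 2) ^ n ≤ (rAP 3 m n : ℝ) := by
  classical
  obtain ⟨k, hk⟩ := hodd
  set q : ℕ := (m+1)/2 with hqdef
  have h2q : 2 * q = m + 1 := by omega
  have hq : 2 ≤ q := by omega
  have hqm : q ≤ m := by omega
  haveI : NeZero m := ⟨by omega⟩
  set A : ℝ := Real.sqrt (2 * ((Stmt8Aux.V q).toNat : ℝ)) + 1 with hA
  have hA1 : 1 ≤ A := by
    have := Real.sqrt_nonneg (2 * ((Stmt8Aux.V q).toNat : ℝ))
    rw [hA]; linarith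
  have hApos : 0 < A := by linarith
  refine ⟨1/(4*A), by positivity, ?_⟩
  intro n hn
  obtain ⟨s, hcount⟩ := Stmt8Aux.main_count q hq hn
  set t : ℕ := Nat.sqrt (2 * n * (Stmt8Aux.V q).toNat) + 1 with htdef
  set fib : Finset (Fin n → Fin q) :=
    Finset.univ.filter (fun x : Fin n → Fin q => Stmt8Aux.key q x = s) with hfib
  set S : Finset (Fin n → ZMod m) := fib.image (fun x i => ((x i : ℕ) : ZMod m)) with hS
  have hfree : ProgFree m 3 S := Stmt8Aux.progfree q m hm h2q n s
  have hemb_inj : Function.Injective (fun (x : Fin n → Fin q) (i : Fin n) => ((x i : ℕ) : ZMod m)) := by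
    intro x y h
    funext i
    have h1 := congrFun h i
    have hx := (x i).isLt
    have hy := (y i).isLt
    have h2 := congrArg ZMod.val h1
    have hxm : (x i : ℕ) < m := lt_of_lt_of_le hx hqm
    have hym : (y i : ℕ) < m := lt_of_lt_of_le hy hqm
    rw [ZMod.val_cast_of_lt hxm, ZMod.val_cast_of_lt hym] at h2
    exact Fin.ext h2
  have hScard : S.card = fib.card := Finset.card_image_of_injective _ hemb_inj
  have hrap : fib.card ≤ rAP 3 m n := by
    apply le_csSup
    · refine ⟨Fintype.card (Fin n → ZMod m), ?_⟩
      rintro c ⟨S', _, rfl⟩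
      exact S'.card_le_univ
    · exact ⟨S, hfree, hScard⟩
  have hq_real : ((q:ℝ)) = ((m:ℝ)+1)/2 := by
    have h1 : ((2*q : ℕ) : ℝ) = ((m+1 : ℕ) : ℝ) := by rw [h2q]
    push_cast at h1; linarith
  have hsqrtn : 1 ≤ Real.sqrt n := by
    rw [show (1:ℝ) = Real.sqrt 1 by simp]
    exact Real.sqrt_le_sqrt (by exact_mod_cast hn)
  have hsqrtnpos : 0 < Real.sqrt n := by linarith
  have htR : (t:ℝ) ≤ A * Real.sqrt n := by
    have h1 : ((Nat.sqrt (2 * n * (Stmt8Aux.V q).toNat) : ℝ))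
        ≤ Real.sqrt ((2 * n * (Stmt8Aux.V q).toNat : ℕ) : ℝ) := Real.nat_sqrt_le_real_sqrt
    have h2 : Real.sqrt ((2 * n * (Stmt8Aux.V q).toNat : ℕ) : ℝ)
        = Real.sqrt (2 * ((Stmt8Aux.V q).toNat : ℝ)) * Real.sqrt n := by
      rw [← Real.sqrt_mul (by positivity) (n:ℝ)]
      congr 1
      push_cast
      ring
    have h3 : (t:ℝ) = ((Nat.sqrt (2 * n * (Stmt8Aux.V q).toNat) : ℝ)) + 1 := by
      rw [htdef]; push_cast; ring
    rw [h3, hA]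
    have h4 : Real.sqrt (2 * ((Stmt8Aux.V q).toNat : ℝ)) * Real.sqrt n + 1
        ≤ (Real.sqrt (2 * ((Stmt8Aux.V q).toNat : ℝ)) + 1) * Real.sqrt n := by
      have := Real.sqrt_nonneg (2 * ((Stmt8Aux.V q).toNat : ℝ))
      nlinarith
    calc ((Nat.sqrt (2 * n * (Stmt8Aux.V q).toNat) : ℝ)) + 1
        ≤ Real.sqrt (2 * ((Stmt8Aux.V q).toNat : ℝ)) * Real.sqrt n + 1 := by
          rw [← h2]; linarith
      _ ≤ _ := h4
  have hcountR : ((q:ℝ))^n ≤ 4 * (t:ℝ) * (rAP 3 m n : ℝ) := by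
    have h1 : (q:ℕ)^n ≤ 4 * t * (rAP 3 m n) :=
      le_trans hcount (Nat.mul_le_mul_left _ hrap)
    exact_mod_cast h1
  have hrapnn : (0:ℝ) ≤ (rAP 3 m n : ℝ) := by positivity
  have hstep : ((q:ℝ))^n ≤ 4 * A * Real.sqrt n * (rAP 3 m n : ℝ) := by
    calc ((q:ℝ))^n ≤ 4 * (t:ℝ) * (rAP 3 m n : ℝ) := hcountR
      _ ≤ 4 * (A * Real.sqrt n) * (rAP 3 m n : ℝ) := by nlinarith [htR, hrapnn]
      _ = 4 * A * Real.sqrt n * (rAP 3 m n : ℝ) := by ring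
  rw [← hq_real]
  have hpos : 0 < 4 * A * Real.sqrt n := by positivity
  rw [div_div, one_div, inv_mul_eq_div, div_le_iff₀ hpos]
  ring_nf
  ring_nf at hstep
  linarith [hstep]
end

section
/- Let m ≥ 4 be an even integer. There exists a constant C_m > 0 such that for all n ≥ 1: r_3(ℤ_m^n) ≥ (C_m / √n) · ((m+2)/2)^n. -/
open Finset


lemma sum_piFinset_succ {β : Type*} [DecidableEq β] (B : Finset β) (n : ℕ)
    (f : (Fin (n+1) → β) → ℤ) :
    ∑ x ∈ Fintype.piFinset (fun _ : Fin (n+1) => B), f x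
      = ∑ a ∈ B, ∑ y ∈ Fintype.piFinset (fun _ : Fin n => B), f ((Fin.cons a y : Fin (n+1) → β)) := by
  rw [← Finset.sum_product']
  refine Finset.sum_nbij' (fun x => (x 0, Fin.tail x)) (fun p => Fin.cons p.1 p.2) ?_ ?_ ?_ ?_ ?_
  · intro x hx
    simp only [Fintype.mem_piFinset] at hx
    simp [Finset.mem_product, Fintype.mem_piFinset, hx, Fin.tail]
  · intro p hp
    simp only [Finset.mem_product, Fintype.mem_piFinset] at hp
    simp only [Fintype.mem_piFinset]
    intro i
    refine Fin.cases ?_ ?_ i <;> simp [hp.1, hp.2 _]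
  · intro x _; exact Fin.cons_self_tail x
  · intro p _; simp
  · intro x _; rw [Fin.cons_self_tail]

lemma var_identity {β : Type*} [DecidableEq β] (B : Finset β) (h : β → ℤ)
    (hh : ∑ b ∈ B, h b = 0) (n : ℕ) :
    (∑ x ∈ Fintype.piFinset (fun _ : Fin n => B), (∑ i, h (x i)) = 0) ∧
    (∑ x ∈ Fintype.piFinset (fun _ : Fin n => B), (∑ i, h (x i))^2
      = n * (B.card : ℤ)^(n-1) * ∑ b ∈ B, (h b)^2) := by
  induction n with
  | zero => simp
  | succ n ih =>
    obtain ⟨ih1, ih2⟩ := ih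
    have hcard : ∀ f : (Fin n → β) → ℤ, (∀ x, f x = (1:ℤ)) →
        ∑ x ∈ Fintype.piFinset (fun _ : Fin n => B), f x = (B.card : ℤ)^n := by
      intro f hf
      simp only [hf, Finset.sum_const, Fintype.card_piFinset]
      simp [mul_comm]
    have hN : ∑ x ∈ Fintype.piFinset (fun _ : Fin n => B), (1:ℤ) = (B.card : ℤ)^n := by
      simp [Fintype.card_piFinset]
    constructor
    · rw [sum_piFinset_succ]
      have : ∀ a, ∀ y : Fin n → β, (∑ i : Fin (n+1), h ((Fin.cons a y : Fin (n+1) → β) i))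
          = h a + ∑ i : Fin n, h (y i) := by
        intro a y; rw [Fin.sum_univ_succ]; simp
      simp only [this]
      rw [Finset.sum_congr rfl (fun a _ => by rw [Finset.sum_add_distrib, ih1, add_zero,
        Finset.sum_const, nsmul_eq_mul])]
      rw [← Finset.mul_sum, hh, mul_zero]
  -- second part
    · rw [sum_piFinset_succ]
      have key : ∀ a ∈ B, ∑ y ∈ Fintype.piFinset (fun _ : Fin n => B),
          (∑ i : Fin (n+1), h ((Fin.cons a y : Fin (n+1) → β) i))^2
          = (B.card:ℤ)^n * (h a)^2 + n * (B.card : ℤ)^(n-1) * ∑ b ∈ B, (h b)^2 := by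
        intro a _
        have : ∀ y : Fin n → β, (∑ i : Fin (n+1), h ((Fin.cons a y : Fin (n+1) → β) i))^2
            = (h a)^2 + 2 * h a * (∑ i : Fin n, h (y i)) + (∑ i : Fin n, h (y i))^2 := by
          intro y; rw [Fin.sum_univ_succ]; simp only [Fin.cons_zero, Fin.cons_succ]; ring
        simp only [this]
        rw [Finset.sum_add_distrib, Finset.sum_add_distrib, ← Finset.mul_sum, ih1, ih2,
          Finset.sum_const, nsmul_eq_mul]
        simp [Fintype.card_piFinset, mul_comm]
      rw [Finset.sum_congr rfl key, Finset.sum_add_distrib, ← Finset.mul_sum,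
        Finset.sum_const, nsmul_eq_mul, Nat.add_sub_cancel]
      have hpow : (B.card:ℤ) * ((n:ℤ) * (B.card : ℤ)^(n-1) * ∑ b ∈ B, (h b)^2)
          = n * (B.card:ℤ)^n * ∑ b ∈ B, (h b)^2 := by
        cases n with
        | zero => simp
        | succ k => rw [Nat.add_sub_cancel, pow_succ]; ring
      rw [hpow]; push_cast; ring

def Gq (q : ℕ) (a : ℕ) : ℤ := (a : ℤ) * ((q : ℤ) - a)

lemma coord (q : ℕ) (α β γ : ℕ) (hα : α ≤ q) (hβ : β ≤ q) (hγ : γ ≤ q)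
    (hd : ((2*q : ℕ) : ℤ) ∣ ((α : ℤ) + γ - 2*β)) :
    Gq q α + Gq q γ - 2 * Gq q β ≤ 0 ∧ (Gq q α + Gq q γ - 2 * Gq q β = 0 → α = γ) := by
  obtain ⟨k, hk⟩ := hd
  have hcase : (α : ℤ) + γ - 2*β = 0 ∨ ((α:ℤ) = q ∧ (γ:ℤ) = q ∧ (β:ℤ) = 0)
      ∨ ((α:ℤ) = 0 ∧ (γ:ℤ) = 0 ∧ (β:ℤ) = q) := by
    rcases eq_or_ne q 0 with rfl | hq
    · left; omega
    have hq' : (0:ℤ) < 2*q := by positivity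
    push_cast at hk
    have hk1 : k ≤ 1 := by nlinarith
    have hk2 : -1 ≤ k := by nlinarith
    interval_cases k
    · right; right; omega
    · left; omega
    · right; left; omega
  unfold Gq
  rcases hcase with h | ⟨h1, h2, h3⟩ | ⟨h1, h2, h3⟩
  · constructor
    · nlinarith [sq_nonneg ((α:ℤ) - γ)]
    · intro he
      have : ((α:ℤ) - γ)^2 = 0 := by nlinarith
      have := pow_eq_zero_iff (n := 2) (by norm_num) |>.mp this
      omega
  · constructor
    · rw [h1, h2, h3]; ring_nf; nlinarith
    · intro _; omega
  · constructor
    · rw [h1, h2, h3]; ring_nf; nlinarith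
    · intro _; omega

lemma progfree_main (m q : ℕ) [NeZero m] (hm : m = 2*q) (hq : 1 ≤ q) (n : ℕ) (t : ℤ) :
    ProgFree m 3 (Finset.univ.filter (fun x : Fin n → ZMod m =>
      (∀ i, (x i).val ≤ q) ∧ ∑ i, Gq q ((x i).val) = t)) := by
  rintro ⟨x, d, hinj, hmem⟩
  have e0 : x + ((0 : Fin 3) : ℕ) • d = x := by norm_num
  have e1 : x + ((1 : Fin 3) : ℕ) • d = x + d := by norm_num
  have e2 : x + ((2 : Fin 3) : ℕ) • d = x + d + d := by
    have : ((2 : Fin 3) : ℕ) = 2 := rfl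
    rw [this, two_smul, add_assoc]
  have h0 := hmem 0; rw [e0] at h0
  have h1 := hmem 1; rw [e1] at h1
  have h2 := hmem 2; rw [e2] at h2
  simp only [Finset.mem_filter, Finset.mem_univ, true_and] at h0 h1 h2
  obtain ⟨hb0, hs0⟩ := h0
  obtain ⟨hb1, hs1⟩ := h1
  obtain ⟨hb2, hs2⟩ := h2
  have coordfact : ∀ i, Gq q ((x i).val) + Gq q (((x+d+d) i).val)
      - 2 * Gq q (((x+d) i).val) ≤ 0 ∧
      (Gq q ((x i).val) + Gq q (((x+d+d) i).val) - 2 * Gq q (((x+d) i).val) = 0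
        → (x i).val = ((x+d+d) i).val) := by
    intro i
    refine coord q _ _ _ (hb0 i) (hb1 i) (hb2 i) ?_
    have hz : (((x i).val : ℕ) : ZMod m) + ((((x+d+d) i).val : ℕ) : ZMod m)
        = 2 * ((((x+d) i).val : ℕ) : ZMod m) := by
      simp only [ZMod.natCast_val, ZMod.cast_id]
      simp only [Pi.add_apply]
      ring
    have hz2 : (((x i).val + ((x+d+d) i).val : ℕ) : ZMod m)
        = ((2 * ((x+d) i).val : ℕ) : ZMod m) := by push_cast; exact hz
    have hmod := (ZMod.natCast_eq_natCast_iff _ _ _).mp hz2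
    have hdvd := hmod.dvd
    have hmz : ((2*q : ℕ) : ℤ) = (m:ℤ) := by exact_mod_cast congrArg (Nat.cast : ℕ → ℤ) hm.symm
    rw [hmz]
    have heq : ((x i).val:ℤ) + (((x+d+d) i).val:ℤ) - 2*(((x+d) i).val:ℤ)
        = -( ((2 * ((x + d) i).val : ℕ):ℤ) - (((x i).val + ((x + d + d) i).val : ℕ):ℤ)) := by
      push_cast; ring
    rw [heq]
    exact dvd_neg.mpr hdvd
  have hsum : ∑ i, (Gq q ((x i).val) + Gq q (((x+d+d) i).val)
      - 2 * Gq q (((x+d) i).val)) = 0 := by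
    rw [Finset.sum_sub_distrib, Finset.sum_add_distrib, ← Finset.mul_sum, hs0, hs1, hs2]
    ring
  have hzero := (Finset.sum_eq_zero_iff_of_nonpos
    (fun i _ => (coordfact i).1)).mp hsum
  have hxc : x = x + d + d := by
    funext i
    exact ZMod.val_injective m ((coordfact i).2 (hzero i (Finset.mem_univ i)))
  have : (fun i : Fin 3 => x + (i : ℕ) • d) 2 = (fun i : Fin 3 => x + (i : ℕ) • d) 0 := by
    simp only [e0, e2]; exact hxc.symm
  have := hinj this
  exact absurd this (by decide)


/-- Maximal size of a subset of `(ℤ/mℤ)^n` without a proper `k`-term AP. -/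
def Aset (m q : ℕ) [NeZero m] : Finset (ZMod m) := Finset.univ.filter (fun z => z.val ≤ q)

noncomputable def H1c (m q : ℕ) [NeZero m] : ℤ := ∑ w ∈ Aset m q, Gq q w.val

noncomputable def hfun (m q : ℕ) [NeZero m] (z : ZMod m) : ℤ :=
  (q+1 : ℤ) * Gq q z.val - H1c m q

noncomputable def Kconst (m q : ℕ) [NeZero m] : ℕ :=
  (∑ z ∈ Aset m q, (hfun m q z)^2).toNat

lemma card_Aset (m q : ℕ) [NeZero m] (hm : m = 2*q) (hq : 1 ≤ q) :
    (Aset m q).card = q + 1 := by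
  have hqm : q + 1 ≤ m := by omega
  have : Aset m q = (Finset.range (q+1)).image (Nat.cast : ℕ → ZMod m) := by
    ext z
    simp only [Aset, Finset.mem_filter, Finset.mem_univ, true_and, Finset.mem_image,
      Finset.mem_range]
    constructor
    · intro hz
      exact ⟨z.val, by omega, by simp [ZMod.natCast_val, ZMod.cast_id]⟩
    · rintro ⟨a, ha, rfl⟩
      rw [ZMod.val_cast_of_lt (by omega)]
      omega
  rw [this, Finset.card_image_of_injOn, Finset.card_range]
  intro a ha b hb hab
  simp only [Finset.coe_range, Set.mem_Iio] at ha hb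
  have h1 : ((a : ZMod m)).val = a := ZMod.val_cast_of_lt (by omega)
  have h2 : ((b : ZMod m)).val = b := ZMod.val_cast_of_lt (by omega)
  rw [← h1, ← h2, hab]

lemma sum_hfun (m q : ℕ) [NeZero m] (hm : m = 2*q) (hq : 1 ≤ q) :
    ∑ z ∈ Aset m q, hfun m q z = 0 := by
  unfold hfun
  rw [Finset.sum_sub_distrib, Finset.sum_const, ← Finset.mul_sum, card_Aset m q hm hq]
  unfold H1c
  push_cast
  ring

lemma main_count (m q : ℕ) [NeZero m] (hm : m = 2*q) (hq : 1 ≤ q) (n : ℕ) (hn : 1 ≤ n) :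
    ∃ t : ℤ,
      (q+1)^n ≤ 2*(2*(Nat.sqrt (2*n*(Kconst m q)))+1) *
        (Finset.univ.filter (fun x : Fin n → ZMod m =>
          (∀ i, (x i).val ≤ q) ∧ ∑ i, Gq q ((x i).val) = t)).card := by
  classical
  set A := Aset m q with hA
  set K : ℕ := Kconst m q with hKdef
  set R : ℕ := Nat.sqrt (2*n*K) with hRdef
  set W := Fintype.piFinset (fun _ : Fin n => A) with hW
  have hAcard : A.card = q + 1 := card_Aset m q hm hq
  have hWcard : W.card = (q+1)^n := by
    rw [hW, Fintype.card_piFinset]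
    simp [hAcard]
  have hKnonneg : (0:ℤ) ≤ ∑ z ∈ A, (hfun m q z)^2 :=
    Finset.sum_nonneg (fun z _ => sq_nonneg _)
  have hKeq : ((K:ℤ)) = ∑ z ∈ A, (hfun m q z)^2 := by
    rw [hKdef]; unfold Kconst; rw [Int.toNat_of_nonneg hKnonneg]
  set F : (Fin n → ZMod m) → ℤ := fun x => ∑ i, hfun m q (x i) with hF
  have hvar : ∑ x ∈ W, (F x)^2 = n * ((q+1:ℕ):ℤ)^(n-1) * (K:ℤ) := by
    rw [hKeq]
    have := (var_identity A (hfun m q) (sum_hfun m q hm hq) n).2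
    rw [hAcard] at this
    exact this
  set bad := W.filter (fun x => 2*(n:ℤ)*K < (F x)^2) with hbad
  set good := W.filter (fun x => (F x)^2 ≤ 2*(n:ℤ)*K) with hgood
  have hbadbound : (2*(n:ℤ)*K + 1) * bad.card ≤ ∑ x ∈ W, (F x)^2 := by
    calc (2*(n:ℤ)*K + 1) * bad.card = ∑ _x ∈ bad, (2*(n:ℤ)*K + 1) := by
          rw [Finset.sum_const, nsmul_eq_mul]; ring
      _ ≤ ∑ x ∈ bad, (F x)^2 := by
          refine Finset.sum_le_sum (fun x hx => ?_)
          rw [hbad, Finset.mem_filter] at hx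
          omega
      _ ≤ ∑ x ∈ W, (F x)^2 := by
          refine Finset.sum_le_sum_of_subset_of_nonneg (Finset.filter_subset _ _)
            (fun x _ _ => sq_nonneg _)
  have hbad2 : 2 * bad.card ≤ (q+1)^(n-1) := by
    have h1 : (2*(n:ℤ)*K + 1) * (2 * bad.card) ≤ (2*(n:ℤ)*K + 1) * ((q+1:ℕ):ℤ)^(n-1) := by
      calc (2*(n:ℤ)*K + 1) * (2 * bad.card) = 2 * ((2*(n:ℤ)*K + 1) * bad.card) := by ring
        _ ≤ 2 * ((n:ℤ) * ((q+1:ℕ):ℤ)^(n-1) * K) := by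
            have := hbadbound.trans_eq hvar
            linarith
        _ ≤ (2*(n:ℤ)*K + 1) * ((q+1:ℕ):ℤ)^(n-1) := by
            have hp : (0:ℤ) ≤ ((q+1:ℕ):ℤ)^(n-1) := by positivity
            nlinarith
    have h2 := le_of_mul_le_mul_left h1 (by positivity : (0:ℤ) < 2*(n:ℤ)*K + 1)
    exact_mod_cast h2
  have hsplit : good.card + bad.card = (q+1)^n := by
    rw [hgood, hbad, ← hWcard]
    rw [← Finset.card_filter_add_card_filter_not (s := W)
      (p := fun x => (F x)^2 ≤ 2*(n:ℤ)*K)]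
    congr 1
    exact congrArg Finset.card (Finset.filter_congr (fun x _ => by simp [not_le]))
  have hpow_le : (q+1)^(n-1) ≤ (q+1)^n := Nat.pow_le_pow_right (by omega) (by omega)
  have hgood2 : (q+1)^n ≤ 2 * good.card := by omega
  have hgoodpos : 0 < good.card := by
    have : 0 < (q+1)^n := by positivity
    omega
  -- image of good under F is inside Icc (-R) R
  have himg : good.image F ⊆ Finset.Icc (-(R:ℤ)) (R:ℤ) := by
    intro v hv
    rw [Finset.mem_image] at hv
    obtain ⟨x, hx, rfl⟩ := hv
    rw [hgood, Finset.mem_filter] at hx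
    have hsq : (F x).natAbs * (F x).natAbs ≤ 2*n*K := by
      have h1 : (((F x).natAbs * (F x).natAbs : ℕ) : ℤ) = F x * F x := Int.natAbs_mul_self
      have h2 : F x * F x ≤ ((2*n*K : ℕ) : ℤ) := by push_cast; nlinarith [hx.2]
      exact_mod_cast h1.trans_le h2
    have hRle : (F x).natAbs ≤ R := by
      rw [hRdef]
      exact Nat.le_sqrt.mpr hsq
    have habs : |F x| ≤ (R:ℤ) := by
      rw [Int.abs_eq_natAbs]
      exact_mod_cast hRle
    rw [Finset.mem_Icc]
    constructor
    · linarith [neg_abs_le (F x)]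
    · linarith [le_abs_self (F x)]
  have himgcard : (good.image F).card ≤ 2*R+1 := by
    calc (good.image F).card ≤ (Finset.Icc (-(R:ℤ)) (R:ℤ)).card := Finset.card_le_card himg
      _ = 2*R+1 := by rw [Int.card_Icc]; omega
  -- pigeonhole
  have hfib := Finset.card_eq_sum_card_fiberwise
    (f := F) (s := good) (t := good.image F) (fun x hx => Finset.mem_image_of_mem F hx)
  have himgne : (good.image F).Nonempty := by
    rw [Finset.image_nonempty]
    exact Finset.card_pos.mp hgoodpos
  obtain ⟨v, hv, hvle⟩ : ∃ v ∈ good.image F,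
      good.card ≤ (good.image F).card * (good.filter (fun x => F x = v)).card := by
    by_contra hcon
    push_neg at hcon
    have hlt := Finset.sum_lt_sum_of_nonempty himgne
      (f := fun v => (good.image F).card * (good.filter (fun x => F x = v)).card)
      (g := fun _ => good.card) (fun v hv => hcon v hv)
    rw [← Finset.mul_sum, ← hfib, Finset.sum_const, smul_eq_mul] at hlt
    omega
  set fib := good.filter (fun x => F x = v) with hfib2
  have hfibpos : 0 < fib.card := by
    rcases Nat.eq_zero_or_pos fib.card with h | h
    · rw [h, Nat.mul_zero] at hvle; omega
    · exact h
  obtain ⟨x₀, hx₀⟩ := Finset.card_pos.mp hfibpos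
  set t : ℤ := ∑ i, Gq q ((x₀ i).val) with ht
  refine ⟨t, ?_⟩
  -- F determines the Gq-sum
  have hFlin : ∀ x : Fin n → ZMod m, F x = (q+1:ℤ) * (∑ i, Gq q ((x i).val)) - n * H1c m q := by
    intro x
    show (∑ i, hfun m q (x i)) = _
    unfold hfun
    rw [Finset.sum_sub_distrib, Finset.sum_const, ← Finset.mul_sum]
    simp [nsmul_eq_mul, Finset.card_univ]
  have hfibsub : fib ⊆ Finset.univ.filter (fun x : Fin n → ZMod m =>
      (∀ i, (x i).val ≤ q) ∧ ∑ i, Gq q ((x i).val) = t) := by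
    intro x hx
    rw [hfib2, Finset.mem_filter] at hx
    obtain ⟨hxg, hxv⟩ := hx
    rw [hgood, Finset.mem_filter] at hxg
    have hxW := hxg.1
    rw [hW, Fintype.mem_piFinset] at hxW
    have hx0' : F x₀ = v := by
      rw [hfib2, Finset.mem_filter] at hx₀
      exact hx₀.2
    have : F x = F x₀ := by rw [hxv, hx0']
    rw [hFlin, hFlin] at this
    have heq : (q+1:ℤ) * (∑ i, Gq q ((x i).val)) = (q+1:ℤ) * (∑ i, Gq q ((x₀ i).val)) := by
      linarith
    have := mul_left_cancel₀ (by positivity : (q+1:ℤ) ≠ 0) heq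
    rw [Finset.mem_filter]
    refine ⟨Finset.mem_univ _, fun i => ?_, this⟩
    have := hxW i
    rw [hA] at this
    unfold Aset at this
    rw [Finset.mem_filter] at this
    exact this.2
  have hfinal : good.card ≤ (2*R+1) * (Finset.univ.filter (fun x : Fin n → ZMod m =>
      (∀ i, (x i).val ≤ q) ∧ ∑ i, Gq q ((x i).val) = t)).card := by
    calc good.card ≤ (good.image F).card * fib.card := hvle
      _ ≤ (2*R+1) * fib.card := Nat.mul_le_mul_right _ himgcard
      _ ≤ _ := Nat.mul_le_mul_left _ (Finset.card_le_card hfibsub)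
  exact hgood2.trans (by rw [mul_assoc]; exact Nat.mul_le_mul_left 2 hfinal)


theorem stmt9 (m : ℕ) (hm : 4 ≤ m) (heven : Even m) :
    ∃ C : ℝ, 0 < C ∧ ∀ n : ℕ, 1 ≤ n →
      C / Real.sqrt n * (((m : ℝ) + 2) / 2) ^ n ≤ (rAP 3 m n : ℝ) := by
  obtain ⟨q, hq2⟩ := heven
  have hmq : m = 2 * q := by omega
  have hq : 1 ≤ q := by omega
  haveI : NeZero m := ⟨by omega⟩
  refine ⟨1 / (4 * Real.sqrt (2 * (Kconst m q : ℝ)) + 2), by positivity, ?_⟩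
  intro n hn
  obtain ⟨t, hcount⟩ := main_count m q hmq hq n hn
  set K : ℕ := Kconst m q with hK
  set S : Finset (Fin n → ZMod m) := Finset.univ.filter (fun x : Fin n → ZMod m =>
      (∀ i, (x i).val ≤ q) ∧ ∑ i, Gq q ((x i).val) = t) with hS
  have hPF : ProgFree m 3 S := progfree_main m q hmq hq n t
  have hrAP : (S.card : ℕ) ≤ rAP 3 m n := by
    apply le_csSup
    · refine ⟨Fintype.card (Fin n → ZMod m), ?_⟩
      rintro c ⟨T, _, rfl⟩
      exact Finset.card_le_univ T
    · exact ⟨S, hPF, rfl⟩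
  set R : ℕ := Nat.sqrt (2*n*K) with hR
  have hsqrtn : (1:ℝ) ≤ Real.sqrt n := by
    rw [show (1:ℝ) = Real.sqrt 1 by simp]
    exact Real.sqrt_le_sqrt (by exact_mod_cast hn)
  have hsqrtnpos : (0:ℝ) < Real.sqrt n := by linarith
  have ha : (0:ℝ) ≤ Real.sqrt (2*(K:ℝ)) := Real.sqrt_nonneg _
  have hRle : (R:ℝ) ≤ Real.sqrt (2*(K:ℝ)) * Real.sqrt n := by
    have h0 : R^2 ≤ 2*n*K := Nat.sqrt_le' (2*n*K)
    have h1 : (R:ℝ) ≤ Real.sqrt ((2*n*K : ℕ) : ℝ) := by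
      rw [show (R:ℝ) = Real.sqrt ((R:ℝ)^2) from (Real.sqrt_sq (by positivity)).symm]
      apply Real.sqrt_le_sqrt
      have h4 : ((R^2 : ℕ) : ℝ) ≤ ((2*n*K : ℕ) : ℝ) := by exact_mod_cast h0
      push_cast at h4 ⊢
      linarith
    calc (R:ℝ) ≤ Real.sqrt ((2*n*K : ℕ) : ℝ) := h1
      _ = Real.sqrt ((2*(K:ℝ)) * (n:ℝ)) := by norm_num; push_cast; ring_nf
      _ = Real.sqrt (2*(K:ℝ)) * Real.sqrt n := Real.sqrt_mul (by positivity) _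
  set C : ℝ := 1 / (4 * Real.sqrt (2 * (K:ℝ)) + 2) with hC
  have hCpos : 0 < C := by rw [hC]; positivity
  have hC2 : C * (2*(2*(R:ℝ)+1)) ≤ Real.sqrt n := by
    have h2 : 2*(2*(R:ℝ)+1) ≤ (4*Real.sqrt (2*(K:ℝ))+2) * Real.sqrt n := by
      nlinarith
    calc C * (2*(2*(R:ℝ)+1)) ≤ C * ((4*Real.sqrt (2*(K:ℝ))+2) * Real.sqrt n) := by
          exact mul_le_mul_of_nonneg_left h2 hCpos.le
      _ = Real.sqrt n := by rw [hC]; field_simp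
  have hbase : ((m:ℝ) + 2)/2 = (q:ℝ) + 1 := by
    have : (m:ℝ) = 2*(q:ℝ) := by exact_mod_cast congrArg (Nat.cast : ℕ → ℝ) hmq
    rw [this]; ring
  rw [hbase]
  have hcount' : ((q:ℝ)+1)^n ≤ (2*(2*(R:ℝ)+1)) * (S.card : ℝ) := by
    have := hcount
    have h3 : (((q+1)^n : ℕ) : ℝ) ≤ ((2*(2*R+1) * S.card : ℕ) : ℝ) := by exact_mod_cast this
    push_cast at h3
    linarith
  calc C / Real.sqrt n * ((q:ℝ)+1)^n
      ≤ C / Real.sqrt n * ((2*(2*(R:ℝ)+1)) * (S.card : ℝ)) := by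
        exact mul_le_mul_of_nonneg_left hcount' (by positivity)
    _ = (C * (2*(2*(R:ℝ)+1)) / Real.sqrt n) * (S.card : ℝ) := by ring
    _ ≤ (Real.sqrt n / Real.sqrt n) * (S.card : ℝ) := by
        gcongr
    _ = (S.card : ℝ) := by rw [div_self (ne_of_gt hsqrtnpos), one_mul]
    _ ≤ (rAP 3 m n : ℝ) := by exact_mod_cast hrAP
end

section
/- There exists a constant C > 0 such that for all n ≥ 1: r_4(ℤ_{11}^n) ≥ C · 7^n / n^3. -/
/-- Weight function on digits `0,…,6` of `ZMod 11`. -/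
def dig (a : ZMod 11) : ℕ := [30,26,18,15,8,6,0].getD a.val 0

lemma dig_le : ∀ a : ZMod 11, dig a ≤ 30 := by decide

lemma key1_s10 : ∀ a d : ZMod 11, a.val < 7 → (a+d).val < 7 → (a+2*d).val < 7 →
    (a+3*d).val < 7 → dig (a+d) + dig (a+2*d) ≤ dig a + dig (a+3*d) := by decide

lemma key2 : ∀ a d : ZMod 11, d ≠ 0 → a.val < 7 → (a+d).val < 7 → (a+2*d).val < 7 →
    (a+3*d).val < 7 → dig (a+d) + dig (a+2*d) < dig a + dig (a+3*d) := by decide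

lemma cardD : (Finset.univ.filter fun a : ZMod 11 => a.val < 7).card = 7 := by decide

lemma main (n : ℕ) : ∃ S : Finset (Fin n → ZMod 11),
    ProgFree 11 4 S ∧ 7 ^ n ≤ (30 * n + 1) * S.card := by
  classical
  set T : Finset (Fin n → ZMod 11) :=
    Fintype.piFinset (fun _ : Fin n => Finset.univ.filter fun a : ZMod 11 => a.val < 7) with hT
  have hTcard : T.card = 7 ^ n := by
    rw [hT, Fintype.card_piFinset]
    simp [cardD]
  set w : (Fin n → ZMod 11) → ℕ := fun x => ∑ i, dig (x i) with hw
  have hwmem : ∀ x ∈ T, w x ∈ Finset.range (30 * n + 1) := by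
    intro x _
    rw [Finset.mem_range, Nat.lt_succ_iff]
    calc w x ≤ ∑ _i : Fin n, 30 := Finset.sum_le_sum fun i _ => dig_le (x i)
    _ = 30 * n := by simp [mul_comm]
  have hsplit : T.card = ∑ r ∈ Finset.range (30 * n + 1), (T.filter fun x => w x = r).card :=
    Finset.card_eq_sum_card_fiberwise hwmem
  -- pigeonhole
  have hpig : ∃ r ∈ Finset.range (30 * n + 1),
      7 ^ n ≤ (30 * n + 1) * (T.filter fun x => w x = r).card := by
    by_contra hcon
    push_neg at hcon
    have h1 : ∀ r ∈ Finset.range (30 * n + 1),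
        (30 * n + 1) * (T.filter fun x => w x = r).card + 1 ≤ 7 ^ n :=
      fun r hr => (hcon r hr)
    have h2 : (30 * n + 1) * 7 ^ n
        = ∑ r ∈ Finset.range (30 * n + 1), (30 * n + 1) * (T.filter fun x => w x = r).card := by
      rw [← Finset.mul_sum, ← hsplit, hTcard]
    have h3 : ∑ r ∈ Finset.range (30 * n + 1),
          ((30 * n + 1) * (T.filter fun x => w x = r).card + 1)
        ≤ ∑ r ∈ Finset.range (30 * n + 1), 7 ^ n := Finset.sum_le_sum h1
    simp only [Finset.sum_add_distrib, Finset.sum_const, Finset.card_range, smul_eq_mul,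
      mul_one] at h3
    omega
  obtain ⟨r, _, hr⟩ := hpig
  refine ⟨T.filter fun x => w x = r, ?_, hr⟩
  rintro ⟨x, d, hinj, hmem⟩
  have hpt : ∀ t : Fin 4, (x + (t : ℕ) • d) ∈ T ∧ w (x + (t : ℕ) • d) = r := by
    intro t
    have := hmem t
    rw [Finset.mem_filter] at this
    exact this
  have hco : ∀ t : Fin 4, ∀ i : Fin n, (x i + (t : ℕ) * d i).val < 7 := by
    intro t i
    have h := (hpt t).1
    rw [hT, Fintype.mem_piFinset] at h
    have := h i
    rw [Finset.mem_filter] at this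
    simpa [Pi.add_apply, Pi.smul_apply, nsmul_eq_mul] using this.2
  have hws : ∀ t : Fin 4, (∑ i, dig (x i + (t : ℕ) * d i)) = r := by
    intro t
    have h := (hpt t).2
    rw [hw] at h
    simpa [Pi.add_apply, Pi.smul_apply, nsmul_eq_mul] using h
  have hd : d = 0 := by
    by_contra hd0
    have ⟨j, hj⟩ : ∃ j, d j ≠ 0 := Function.ne_iff.mp hd0
    have hle : ∀ i ∈ (Finset.univ : Finset (Fin n)),
        dig (x i + d i) + dig (x i + 2 * d i) ≤ dig (x i) + dig (x i + 3 * d i) := by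
      intro i _
      have h0 := hco 0 i; have h1 := hco 1 i; have h2 := hco 2 i; have h3 := hco 3 i
      norm_num at h0 h1 h2 h3
      exact key1_s10 (x i) (d i) h0 h1 h2 h3
    have hlt : ∑ i, (dig (x i + d i) + dig (x i + 2 * d i))
        < ∑ i, (dig (x i) + dig (x i + 3 * d i)) := by
      refine Finset.sum_lt_sum hle ⟨j, Finset.mem_univ j, ?_⟩
      have h0 := hco 0 j; have h1 := hco 1 j; have h2 := hco 2 j; have h3 := hco 3 j
      norm_num at h0 h1 h2 h3
      exact key2 (x j) (d j) hj h0 h1 h2 h3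
    rw [Finset.sum_add_distrib, Finset.sum_add_distrib] at hlt
    have e0 := hws 0; have e1 := hws 1; have e2 := hws 2; have e3 := hws 3
    norm_num at e0 e1 e2 e3
    omega
  have h01 : x + ((0 : Fin 4) : ℕ) • d = x + ((1 : Fin 4) : ℕ) • d := by
    simp [hd]
  exact absurd (hinj h01) (by decide)

theorem stmt10 :
    ∃ C : ℝ, 0 < C ∧ ∀ n : ℕ, 1 ≤ n →
      C * 7 ^ n / (n : ℝ) ^ 3 ≤ (rAP 4 11 n : ℝ) := by
  refine ⟨1/31, by norm_num, fun n hn => ?_⟩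
  obtain ⟨S, hS, hcard⟩ := main n
  have hbdd : BddAbove {c : ℕ | ∃ S : Finset (Fin n → ZMod 11), ProgFree 11 4 S ∧ S.card = c} := by
    refine ⟨Fintype.card (Fin n → ZMod 11), fun c hc => ?_⟩
    obtain ⟨S, _, rfl⟩ := hc
    exact S.card_le_univ.trans (le_of_eq (Finset.card_univ))
  have hle : S.card ≤ rAP 4 11 n := le_csSup hbdd ⟨S, hS, rfl⟩
  have h1 : (7 : ℝ) ^ n ≤ (30 * n + 1) * (rAP 4 11 n : ℝ) := by
    have := hcard.trans (Nat.mul_le_mul_left _ hle)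
    calc (7:ℝ)^n = ((7^n : ℕ) : ℝ) := by push_cast; ring
    _ ≤ (((30*n+1) * rAP 4 11 n : ℕ) : ℝ) := by exact_mod_cast this
    _ = (30 * n + 1) * (rAP 4 11 n : ℝ) := by push_cast; ring
  have hn1 : (1 : ℝ) ≤ (n : ℝ) := by exact_mod_cast hn
  have hnpos : (0 : ℝ) < (n : ℝ) ^ 3 := by positivity
  rw [div_le_iff₀ hnpos]
  have hrpos : (0 : ℝ) ≤ (rAP 4 11 n : ℝ) := Nat.cast_nonneg _
  have hn3 : (n:ℝ) ≤ (n:ℝ)^3 := le_self_pow₀ hn1 (by norm_num)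
  have hc1 : (1:ℝ) ≤ (n:ℝ)^3 := hn1.trans hn3
  have hb : (30 * (n:ℝ) + 1) ≤ 31 * (n:ℝ)^3 := by linarith
  have h7 : (0:ℝ) < 7 ^ n := by positivity
  nlinarith [mul_le_mul_of_nonneg_right hb hrpos]
end

section
/- Let n ≥ 1 and let S ⊆ (ℤ/4ℤ)^n be the set of all vectors whose coordinates all lie in {0, 1, 2} and which have exactly ⌊n/3⌋ coordinates equal to 1. Then S contains no proper 3-term arithmetic progression in (ℤ/4ℤ)^n, and |S| = C(n, ⌊n/3⌋) · 2^{n − ⌊n/3⌋}, where C(n,i) is the binomial coefficient. -/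
theorem stmt15 (n : ℕ) (hn : 1 ≤ n)
    (S : Finset (Fin n → ZMod 4))
    (hS : S = Finset.univ.filter (fun v : Fin n → ZMod 4 =>
      (∀ i, v i = 0 ∨ v i = 1 ∨ v i = 2) ∧
      (Finset.univ.filter fun i => v i = 1).card = n / 3)) :
    ProgFree 4 3 S ∧ S.card = n.choose (n / 3) * 2 ^ (n - n / 3) := by
  subst hS
  constructor
  · rintro ⟨x, d, hinj, hmem⟩
    have h0 := hmem ⟨0, by omega⟩
    have h1 := hmem ⟨1, by omega⟩
    have h2 := hmem ⟨2, by omega⟩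
    simp only [Finset.mem_filter, Finset.mem_univ, true_and, zero_smul, one_smul,
      add_zero, two_smul, Pi.add_apply] at h0 h1 h2
    obtain ⟨hx, hxc⟩ := h0
    obtain ⟨hxd, hxdc⟩ := h1
    obtain ⟨hxdd, -⟩ := h2
    have key1 : ∀ a b : ZMod 4, (a=0∨a=1∨a=2) → (a+b=0∨a+b=1∨a+b=2) →
        (a+(b+b)=0∨a+(b+b)=1∨a+(b+b)=2) → a = 1 → a + b = 1 := by decide
    have hsub : Finset.univ.filter (fun i => x i = 1) ⊆
        Finset.univ.filter (fun i => x i + d i = 1) := by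
      intro i hi
      simp only [Finset.mem_filter, Finset.mem_univ, true_and] at hi ⊢
      exact key1 _ _ (hx i) (hxd i) (hxdd i) hi
    have heq : Finset.univ.filter (fun i => x i = 1) =
        Finset.univ.filter (fun i => x i + d i = 1) :=
      Finset.eq_of_subset_of_card_le hsub (by rw [hxdc, hxc])
    have hiff : ∀ i, x i + d i = 1 ↔ x i = 1 := by
      intro i
      have := Finset.ext_iff.mp heq i
      simpa using this.symm
    have key2 : ∀ a b : ZMod 4, (a=0∨a=1∨a=2) → (a+b=0∨a+b=1∨a+b=2) →
        (a+(b+b)=0∨a+(b+b)=1∨a+(b+b)=2) → ((a + b = 1) ↔ (a = 1)) → b + b = 0 := by decide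
    have hd : ∀ i, d i + d i = 0 := fun i =>
      key2 _ _ (hx i) (hxd i) (hxdd i) (hiff i)
    have : (⟨0, by omega⟩ : Fin 3) = ⟨2, by omega⟩ := by
      apply hinj
      simp only
      funext i
      simp [two_smul, hd i]
    simp at this
  · have hk : n / 3 ≤ n := Nat.div_le_self n 3
    set k := n / 3 with hkdef
    set F : Finset (Fin n) → Finset (Fin n → ZMod 4) :=
      fun A => Fintype.piFinset (fun i => if i ∈ A then ({1} : Finset (ZMod 4)) else {0,2})
      with hF
    have hFdet : ∀ (A : Finset (Fin n)) (v : Fin n → ZMod 4), v ∈ F A →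
        A = Finset.univ.filter (fun i => v i = 1) := by
      intro A v hv
      rw [hF, Fintype.mem_piFinset] at hv
      ext i
      simp only [Finset.mem_filter, Finset.mem_univ, true_and]
      constructor
      · intro hi; have := hv i; simp [hi] at this; exact this
      · intro hi
        by_contra hA
        have := hv i
        simp [hA] at this
        rcases this with h | h <;> rw [hi] at h <;> exact absurd h (by decide)
    have hSeq : (Finset.univ.filter (fun v : Fin n → ZMod 4 =>
        (∀ i, v i = 0 ∨ v i = 1 ∨ v i = 2) ∧
        (Finset.univ.filter fun i => v i = 1).card = k)) =
        (Finset.univ.powersetCard k).biUnion F := by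
      ext v
      simp only [Finset.mem_filter, Finset.mem_univ, true_and, Finset.mem_biUnion,
        Finset.mem_powersetCard]
      constructor
      · rintro ⟨h012, hcard⟩
        refine ⟨Finset.univ.filter (fun i => v i = 1), ⟨Finset.subset_univ _, hcard⟩, ?_⟩
        rw [hF, Fintype.mem_piFinset]
        intro i
        by_cases hi : v i = 1
        · simp [hi]
        · rcases h012 i with h | h | h
          · rw [h, if_neg (by simp [hi])]; decide
          · exact absurd h hi
          · rw [h, if_neg (by simp [hi])]; decide
      · rintro ⟨A, ⟨-, hcard⟩, hv⟩
        have hAeq := hFdet A v hv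
        rw [hF, Fintype.mem_piFinset] at hv
        constructor
        · intro i
          have := hv i
          split_ifs at this with h
          · simp only [Finset.mem_singleton] at this
            simp [this]
          · simp only [Finset.mem_insert, Finset.mem_singleton] at this
            rcases this with h' | h' <;> simp [h']
        · rw [← hAeq, hcard]
    rw [hSeq]
    rw [Finset.card_biUnion]
    · have hcardF : ∀ A ∈ Finset.univ.powersetCard k, (F A).card = 2 ^ (n - k) := by
        intro A hA
        rw [Finset.mem_powersetCard] at hA
        rw [hF]
        rw [Fintype.card_piFinset]
        have hc : ∀ i : Fin n, (if i ∈ A then ({1} : Finset (ZMod 4)) else {0,2}).card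
            = if i ∈ Aᶜ then 2 else 1 := by
          intro i
          by_cases h : i ∈ A <;> simp [h] <;> decide
        simp_rw [hc]
        rw [Finset.prod_ite_mem, Finset.univ_inter, Finset.prod_const,
          Finset.card_compl, Fintype.card_fin, hA.2]
      rw [Finset.sum_congr rfl hcardF, Finset.sum_const, Finset.card_powersetCard,
        Finset.card_univ, Fintype.card_fin, smul_eq_mul]
    · intro A hA B hB hne
      rw [Function.onFun, Finset.disjoint_left]
      intro v hvA hvB
      exact hne ((hFdet A v hvA).trans (hFdet B v hvB).symm)
end

section
/- For every n ≥ 1, r_3(ℤ_4^n) equals the maximal possible value of ∑_{x ∈ 𝔽_2^n} |A(x)| over all systems of finite subsets A(x) ⊆ 𝔽_2^n (one subset for each x ∈ 𝔽_2^n) satisfying property (*). -/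
/-- Property `(*)`: if `y ∈ x + A(x) +̂ A(x)` (restricted sumset), then `A(y) = ∅`. -/
def PropertyStar {n : ℕ} (A : (Fin n → ZMod 2) → Finset (Fin n → ZMod 2)) : Prop :=
  ∀ x y : Fin n → ZMod 2,
    (∃ a ∈ A x, ∃ a' ∈ A x, a ≠ a' ∧ y = x + a + a') → A y = ∅

open Finset

def e2 (t : ZMod 2) : ZMod 4 := (t.val : ZMod 4)

lemma coord_inj : ∀ x a x' a' : ZMod 2,
    e2 x + 2 * e2 a = e2 x' + 2 * e2 a' → x = x' ∧ a = a' := by decide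

lemma coord_ap : ∀ x a x' a' x'' a'' : ZMod 2,
    ((e2 x + 2 * e2 a) + (e2 x'' + 2 * e2 a'') = 2 * (e2 x' + 2 * e2 a')) ↔
      (x'' = x ∧ x' = x + a + a'') := by decide

lemma coord_two : ∀ x a x' a' : ZMod 2,
    (2 * (e2 x' + 2 * e2 a') = 2 * (e2 x + 2 * e2 a)) ↔ x' = x := by decide

def lo4 (z : ZMod 4) : ZMod 2 := (z.val % 2 : ℕ)
def hi4 (z : ZMod 4) : ZMod 2 := (z.val / 2 : ℕ)

lemma coord_decomp : ∀ z : ZMod 4, e2 (lo4 z) + 2 * e2 (hi4 z) = z := by decide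

def phi {n : ℕ} (x a : Fin n → ZMod 2) : Fin n → ZMod 4 :=
  fun i => e2 (x i) + 2 * e2 (a i)

lemma phi_inj {n : ℕ} {x a x' a' : Fin n → ZMod 2} (h : phi x a = phi x' a') :
    x = x' ∧ a = a' := by
  constructor <;> funext i <;>
    [exact (coord_inj _ _ _ _ (congrFun h i)).1; exact (coord_inj _ _ _ _ (congrFun h i)).2]

lemma phi_decomp {n : ℕ} (z : Fin n → ZMod 4) :
    phi (fun i => lo4 (z i)) (fun i => hi4 (z i)) = z := by
  funext i; exact coord_decomp (z i)

def AS {n : ℕ} (S : Finset (Fin n → ZMod 4)) (x : Fin n → ZMod 2) :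
    Finset (Fin n → ZMod 2) :=
  univ.filter fun a => phi x a ∈ S

lemma mem_AS {n : ℕ} {S : Finset (Fin n → ZMod 4)} {x a : Fin n → ZMod 2} :
    a ∈ AS S x ↔ phi x a ∈ S := by simp [AS]

lemma inj3 {G : Type*} [AddCommGroup G] (p d : G) (hd : d ≠ 0) (h2 : (2:ℕ) • d ≠ 0) :
    Function.Injective fun i : Fin 3 => p + (i : ℕ) • d := by
  intro i j h
  fin_cases i <;> fin_cases j <;> simp_all [two_nsmul]

lemma main_iff {n : ℕ} (S : Finset (Fin n → ZMod 4)) :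
    ProgFree 4 3 S ↔ PropertyStar (AS S) := by
  constructor
  · -- ProgFree → Star
    intro hPF x y hxy
    obtain ⟨a, ha, a'', ha'', hne, hy⟩ := hxy
    by_contra hAy
    obtain ⟨b, hb⟩ := Finset.nonempty_iff_ne_empty.mpr hAy
    apply hPF
    set z := phi x a with hz
    set z' := phi y b with hz'
    set z'' := phi x a'' with hz''
    have hcoord : ∀ i, z i + z'' i = 2 * z' i := by
      intro i
      exact (coord_ap (x i) (a i) (y i) (b i) (x i) (a'' i)).mpr ⟨rfl, by rw [hy]; rfl⟩
    obtain ⟨i, hi⟩ : ∃ i, a i ≠ a'' i := by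
      by_contra hc; push_neg at hc; exact hne (funext hc)
    have hxyi : y i ≠ x i := by
      have hyi : y i = x i + a i + a'' i := by rw [hy]; rfl
      rw [hyi]
      intro hc
      apply hi
      have h0 : a i + a'' i = 0 := by linear_combination hc
      have hlem : ∀ s t : ZMod 2, s + t = 0 → s = t := by decide
      exact hlem _ _ h0
    have h2z : 2 * z' i ≠ 2 * z i := fun hc =>
      hxyi ((coord_two (x i) (a i) (y i) (b i)).mp hc)
    have h2d : (2:ℕ) • (z' - z) ≠ 0 := by
      intro h0
      apply h2z
      have := congrFun h0 i
      simp only [Pi.smul_apply, Pi.sub_apply, two_nsmul, Pi.zero_apply] at this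
      linear_combination this
    have hd : z' - z ≠ 0 := by
      intro hc; apply h2d; rw [hc]; simp
    refine ⟨z, z' - z, inj3 _ _ hd h2d, ?_⟩
    intro j
    have e0 : z + (0:ℕ) • (z' - z) = z := by simp
    have e1 : z + (1:ℕ) • (z' - z) = z' := by funext k; simp
    have e2' : z + (2:ℕ) • (z' - z) = z'' := by
      funext k
      simp only [Pi.add_apply, Pi.smul_apply, Pi.sub_apply, two_nsmul]
      linear_combination -hcoord k
    fin_cases j
    · simpa [e0] using mem_AS.mp ha
    · simpa [e1] using mem_AS.mp hb
    · have e2'' : z + 2 * (z' - z) = z'' := by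
        funext k
        have : (z + 2 * (z' - z)) k = z k + 2 * (z' k - z k) := rfl
        rw [this]
        linear_combination -hcoord k
      simpa [e2', e2''] using mem_AS.mp ha''
  · -- Star → ProgFree
    intro hStar
    rintro ⟨p, d, hinj, hmem⟩
    have h2d : (2:ℕ) • d ≠ 0 := by
      intro h0
      have h02 : (0 : Fin 3) = 2 := hinj (by simp [h0])
      exact absurd h02 (by decide)
    have hz : p ∈ S := by simpa using hmem 0
    have hz' : p + d ∈ S := by simpa using hmem 1
    have hz'' : p + (2:ℕ) • d ∈ S := by simpa using hmem 2
    set u := fun i => lo4 (p i) with hu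
    set a := fun i => hi4 (p i) with haa
    set u' := fun i => lo4 ((p + d) i) with hu'
    set a' := fun i => hi4 ((p + d) i) with ha'
    set u'' := fun i => lo4 ((p + (2:ℕ) • d) i) with hu''
    set a'' := fun i => hi4 ((p + (2:ℕ) • d) i) with ha''
    have hdec : phi u a = p := phi_decomp p
    have hdec' : phi u' a' = p + d := phi_decomp (p + d)
    have hdec'' : phi u'' a'' = p + (2:ℕ) • d := phi_decomp (p + (2:ℕ) • d)
    have key : ∀ i, u'' i = u i ∧ u' i = u i + a i + a'' i := by
      intro i
      refine (coord_ap (u i) (a i) (u' i) (a' i) (u'' i) (a'' i)).mp ?_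
      show phi u a i + phi u'' a'' i = 2 * phi u' a' i
      rw [hdec, hdec', hdec'']
      simp only [Pi.add_apply, Pi.smul_apply, two_nsmul]
      ring
    have hueq : u'' = u := funext fun i => (key i).1
    have hu'eq : u' = u + a + a'' := funext fun i => (key i).2
    have hane : a ≠ a'' := by
      intro hc
      apply h2d
      funext i
      have hui : u' i = u i := by
        have := (key i).2
        rw [hc] at this
        rw [this]
        show u i + a'' i + a'' i = u i
        have : a'' i + a'' i = 0 := by
          generalize a'' i = t; revert t; decide
        linear_combination this
      have h3 : (2 : ZMod 4) * phi u' a' i = 2 * phi u a i :=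
        (coord_two (u i) (a i) (u' i) (a' i)).mpr hui
      rw [hdec, hdec'] at h3
      simp only [Pi.add_apply] at h3
      show ((2:ℕ) • d) i = 0
      simp only [Pi.smul_apply, two_nsmul]
      linear_combination h3
    have hmema : a ∈ AS S u := mem_AS.mpr (by rw [hdec]; exact hz)
    have hmema'' : a'' ∈ AS S u := mem_AS.mpr (by
      have : phi u a'' = p + (2:ℕ) • d := by rw [← hueq]; exact hdec''
      rw [this]; exact hz'')
    have hmema' : a' ∈ AS S u' := mem_AS.mpr (by rw [hdec']; exact hz')
    have hempty : AS S (u + a + a'') = ∅ :=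
      hStar u (u + a + a'') ⟨a, hmema, a'', hmema'', hane, rfl⟩
    rw [← hu'eq] at hempty
    rw [hempty] at hmema'
    exact absurd hmema' (Finset.notMem_empty a')

lemma sum_card {n : ℕ} (S : Finset (Fin n → ZMod 4)) :
    ∑ x : Fin n → ZMod 2, (AS S x).card = S.card := by
  classical
  have h1 : ∑ x : Fin n → ZMod 2, (AS S x).card
      = ((univ ×ˢ univ).filter
          fun p : (Fin n → ZMod 2) × (Fin n → ZMod 2) => phi p.1 p.2 ∈ S).card := by
    rw [Finset.card_filter, Finset.sum_product]
    refine Finset.sum_congr rfl fun x _ => ?_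
    simp only [AS]
    rw [Finset.card_filter]
  rw [h1]
  apply Finset.card_bij (fun p _ => phi p.1 p.2)
  · intro p hp
    exact (Finset.mem_filter.mp hp).2
  · intro p hp q hq h
    have := phi_inj h
    exact Prod.ext this.1 this.2
  · intro z hz
    exact ⟨(fun i => lo4 (z i), fun i => hi4 (z i)),
      Finset.mem_filter.mpr ⟨Finset.mem_product.mpr ⟨Finset.mem_univ _, Finset.mem_univ _⟩,
        by rw [phi_decomp]; exact hz⟩, phi_decomp z⟩

def SA {n : ℕ} (A : (Fin n → ZMod 2) → Finset (Fin n → ZMod 2)) :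
    Finset (Fin n → ZMod 4) :=
  ((univ ×ˢ univ).filter
      fun p : (Fin n → ZMod 2) × (Fin n → ZMod 2) => p.2 ∈ A p.1).image
    fun p => phi p.1 p.2

lemma AS_SA {n : ℕ} (A : (Fin n → ZMod 2) → Finset (Fin n → ZMod 2)) :
    AS (SA A) = A := by
  funext x
  ext a
  rw [mem_AS]
  simp only [SA, Finset.mem_image, Finset.mem_filter, Finset.mem_product]
  constructor
  · rintro ⟨⟨p1, p2⟩, ⟨_, hp⟩, heq⟩
    obtain ⟨h1, h2⟩ := phi_inj heq
    rwa [← h1, ← h2]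
  · intro ha
    exact ⟨(x, a), ⟨⟨Finset.mem_univ _, Finset.mem_univ _⟩, ha⟩, rfl⟩

theorem stmt16 (n : ℕ) (hn : 1 ≤ n) :
    rAP 3 4 n =
      sSup {c : ℕ | ∃ A : (Fin n → ZMod 2) → Finset (Fin n → ZMod 2),
        PropertyStar A ∧ ∑ x : Fin n → ZMod 2, (A x).card = c} := by
  unfold rAP
  congr 1
  ext c
  simp only [Set.mem_setOf_eq]
  constructor
  · rintro ⟨S, hS, rfl⟩
    exact ⟨AS S, (main_iff S).mp hS, sum_card S⟩
  · rintro ⟨A, hA, rfl⟩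
    refine ⟨SA A, (main_iff _).mpr (by rw [AS_SA]; exact hA), ?_⟩
    exact (sum_card (SA A)).symm.trans (by rw [AS_SA])
end

section
/- Let n ≥ 1 and let A(x) ⊆ 𝔽_2^n (for x ∈ 𝔽_2^n) be a system of subsets satisfying property (*) such that every non-empty A(x) is a linear subspace of 𝔽_2^n. Then ∑_{x ∈ 𝔽_2^n} |A(x)| ≤ 3^n. -/
namespace Stmt18Aux

open Finset Module

lemma zmod2_mul_self (a : ZMod 2) : a * a = a := by revert a; decide

lemma zmod2_ne_zero {a : ZMod 2} (h : a ≠ 0) : a = 1 := by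
  revert h; revert a; decide

/-- The monomial function `y ↦ ∏ i ∈ T, y i`. -/
def mono (n : ℕ) (T : Finset (Fin n)) : (Fin n → ZMod 2) → ZMod 2 :=
  fun y => ∏ i ∈ T, y i

/-- The span of monomials of degree at most `c` (a Reed–Muller style space). -/
noncomputable def Mc (n c : ℕ) : Submodule (ZMod 2) ((Fin n → ZMod 2) → ZMod 2) :=
  Submodule.span (ZMod 2)
    ↑((Finset.univ.filter fun T : Finset (Fin n) => T.card ≤ c).image (mono n))

lemma mono_mem {n c : ℕ} {T : Finset (Fin n)} (h : T.card ≤ c) : mono n T ∈ Mc n c := by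
  apply Submodule.subset_span
  simp only [Finset.coe_image, Set.mem_image, Finset.mem_coe, Finset.mem_filter,
    Finset.mem_univ, true_and]
  exact ⟨T, h, rfl⟩

lemma Mc_le {n c c' : ℕ} (h : c ≤ c') : Mc n c ≤ Mc n c' := by
  apply Submodule.span_mono
  intro f hf
  simp only [Finset.coe_image, Set.mem_image, Finset.mem_coe, Finset.mem_filter,
    Finset.mem_univ, true_and] at hf ⊢
  obtain ⟨T, hT, rfl⟩ := hf
  exact ⟨T, hT.trans h, rfl⟩

lemma mul_coord {n c : ℕ} {f : (Fin n → ZMod 2) → ZMod 2} (hf : f ∈ Mc n c) (i : Fin n) :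
    (fun y => f y * y i) ∈ Mc n (c + 1) := by
  refine Submodule.span_induction
    (p := fun f _ => (fun y => f y * y i) ∈ Mc n (c + 1)) ?_ ?_ ?_ ?_ hf
  · intro g hg
    simp only [Finset.coe_image, Set.mem_image, Finset.mem_coe, Finset.mem_filter,
      Finset.mem_univ, true_and] at hg
    obtain ⟨T, hT, rfl⟩ := hg
    have hfun : (fun y => mono n T y * y i) = mono n (insert i T) := by
      funext y
      by_cases hi : i ∈ T
      · rw [Finset.insert_eq_self.mpr hi]
        unfold mono
        rw [← Finset.mul_prod_erase T _ hi]
        have hcalc : (y i * ∏ x ∈ T.erase i, y x) * y i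
            = (y i * y i) * ∏ x ∈ T.erase i, y x := by ring
        rw [hcalc, zmod2_mul_self]
      · unfold mono
        rw [Finset.prod_insert hi, mul_comm]
    rw [hfun]
    exact mono_mem ((Finset.card_insert_le _ _).trans (Nat.add_le_add_right hT 1))
  · show (fun y => (0 : (Fin n → ZMod 2) → ZMod 2) y * y i) ∈ Mc n (c + 1)
    have : (fun y : Fin n → ZMod 2 => (0 : (Fin n → ZMod 2) → ZMod 2) y * y i) = 0 := by
      funext y; simp
    rw [this]; exact Submodule.zero_mem _
  · intro g h _ _ hg hh
    show (fun y => (g + h) y * y i) ∈ Mc n (c + 1)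
    have : (fun y => (g + h) y * y i)
        = (fun y => g y * y i) + (fun y => h y * y i) := by
      funext y; simp [add_mul]
    rw [this]; exact Submodule.add_mem _ hg hh
  · intro a g _ hg
    show (fun y => (a • g) y * y i) ∈ Mc n (c + 1)
    have : (fun y => (a • g) y * y i) = a • fun y => g y * y i := by
      funext y; simp [smul_eq_mul, mul_assoc]
    rw [this]; exact Submodule.smul_mem _ _ hg

lemma mul_linear {n c : ℕ} {f : (Fin n → ZMod 2) → ZMod 2} (hf : f ∈ Mc n c)
    (φ : (Fin n → ZMod 2) →ₗ[ZMod 2] ZMod 2) :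
    (fun y => f y * φ y) ∈ Mc n (c + 1) := by
  have h : (fun y => f y * φ y)
      = ∑ i : Fin n, φ (fun j => if i = j then 1 else 0) • fun y => f y * y i := by
    funext y
    rw [Finset.sum_apply]
    rw [LinearMap.pi_apply_eq_sum_univ φ y, Finset.mul_sum]
    refine Finset.sum_congr rfl fun i _ => ?_
    simp only [Pi.smul_apply, smul_eq_mul]
    ring
  rw [h]
  exact Submodule.sum_mem _ fun i _ => Submodule.smul_mem _ _ (mul_coord hf i)

lemma prod_affine {n : ℕ} : ∀ (k : ℕ) (a : Fin k → ZMod 2)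
    (φ : Fin k → ((Fin n → ZMod 2) →ₗ[ZMod 2] ZMod 2)),
    (fun y => ∏ t, (a t + φ t y)) ∈ Mc n k := by
  intro k
  induction k with
  | zero =>
    intro a φ
    have : (fun y : Fin n → ZMod 2 => ∏ t : Fin 0, (a t + φ t y)) = mono n ∅ := by
      funext y; simp [mono]
    rw [this]
    exact mono_mem (by simp)
  | succ k ih =>
    intro a φ
    have h1 : (fun y => ∏ t : Fin (k + 1), (a t + φ t y))
        = (a (Fin.last k)) • (fun y => ∏ t : Fin k, (a t.castSucc + φ t.castSucc y))
          + fun y => (∏ t : Fin k, (a t.castSucc + φ t.castSucc y)) * φ (Fin.last k) y := by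
      funext y
      rw [Fin.prod_univ_castSucc]
      simp only [Pi.add_apply, Pi.smul_apply, smul_eq_mul]
      ring
    rw [h1]
    have hP := ih (fun t => a t.castSucc) fun t => φ t.castSucc
    exact Submodule.add_mem _
      (Mc_le (Nat.le_succ k) (Submodule.smul_mem _ _ hP))
      (mul_linear hP _)

/-- The indicator function of the coset `x + W` lies in the span of monomials of degree at most
the codimension of `W`. -/
lemma coset_mem {n : ℕ} (W : Submodule (ZMod 2) (Fin n → ZMod 2))
    [DecidablePred (· ∈ W)] (x : Fin n → ZMod 2) :
    (fun y => if x + y ∈ W then (1 : ZMod 2) else 0)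
      ∈ Mc n (Module.finrank (ZMod 2) ((Fin n → ZMod 2) ⧸ W)) := by
  classical
  set c := Module.finrank (ZMod 2) ((Fin n → ZMod 2) ⧸ W) with hc
  let B : Basis (Fin c) (ZMod 2) ((Fin n → ZMod 2) ⧸ W) := Module.finBasis _ _
  set φ : Fin c → ((Fin n → ZMod 2) →ₗ[ZMod 2] ZMod 2) :=
    fun t => (B.coord t) ∘ₗ W.mkQ with hφ
  have hiff : ∀ v, v ∈ W ↔ ∀ t, φ t v = 0 := by
    intro v
    constructor
    · intro hv t
      have hm : W.mkQ v = 0 := by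
        rw [Submodule.mkQ_apply, Submodule.Quotient.mk_eq_zero]; exact hv
      rw [hφ]
      simp only [LinearMap.comp_apply]
      rw [hm, map_zero]
    · intro h
      have h' : ∀ t, B.coord t (W.mkQ v) = 0 := by
        intro t
        have ht := h t
        rw [hφ] at ht
        simpa using ht
      have h0 : W.mkQ v = 0 := (B.forall_coord_eq_zero_iff).mp h'
      rw [Submodule.mkQ_apply, Submodule.Quotient.mk_eq_zero] at h0
      exact h0
  have heq : (fun y => if x + y ∈ W then (1 : ZMod 2) else 0)
      = fun y => ∏ t, ((1 + φ t x) + φ t y) := by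
    funext y
    have hadd : ∀ t, (1 + φ t x) + φ t y = 1 + φ t (x + y) := by
      intro t; rw [map_add]; ring
    by_cases h : x + y ∈ W
    · rw [if_pos h]
      symm
      apply Finset.prod_eq_one
      intro t _
      rw [hadd t, (hiff _).mp h t, add_zero]
    · rw [if_neg h]
      obtain ⟨t, ht⟩ := not_forall.mp fun hh => h ((hiff _).mpr hh)
      symm
      apply Finset.prod_eq_zero (Finset.mem_univ t)
      rw [hadd t, zmod2_ne_zero ht]
      decide
  rw [heq]
  exact prod_affine c _ φ

/-- Abel-type summation bound: if partial sums of `m` are dominated by partial sums of `b`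
and `w` is antitone, then the `w`-weighted sum of `m` is at most that of `b`. -/
lemma abel_sum : ∀ (N : ℕ) (m b w : ℕ → ℕ),
    (∀ k, w (k + 1) ≤ w k) →
    (∀ c, c ≤ N → ∑ i ∈ Finset.range (c + 1), m i ≤ ∑ i ∈ Finset.range (c + 1), b i) →
    ∑ i ∈ Finset.range (N + 1), m i * w i
      + ((∑ i ∈ Finset.range (N + 1), b i) - ∑ i ∈ Finset.range (N + 1), m i) * w N
      ≤ ∑ i ∈ Finset.range (N + 1), b i * w i := by
  intro N
  induction N with
  | zero =>
    intro m b w _ h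
    have h0 : m 0 ≤ b 0 := by simpa using h 0 le_rfl
    simp only [zero_add, Finset.sum_range_one]
    rw [← Nat.add_mul, Nat.add_sub_cancel' h0]
  | succ N ih =>
    intro m b w hw h
    have hMB : ∑ i ∈ Finset.range (N + 1), m i ≤ ∑ i ∈ Finset.range (N + 1), b i :=
      h N (Nat.le_succ N)
    have hMB1 : ∑ i ∈ Finset.range (N + 1 + 1), m i ≤ ∑ i ∈ Finset.range (N + 1 + 1), b i :=
      h (N + 1) le_rfl
    have ihs := ih m b w hw fun c hc => h c (hc.trans (Nat.le_succ N))
    rw [Finset.sum_range_succ (f := fun i => m i * w i),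
        Finset.sum_range_succ (f := fun i => b i * w i),
        Finset.sum_range_succ (f := fun i => m i),
        Finset.sum_range_succ (f := fun i => b i)]
    rw [Finset.sum_range_succ (f := fun i => m i),
        Finset.sum_range_succ (f := fun i => b i)] at hMB1
    set M := ∑ i ∈ Finset.range (N + 1), m i with hM
    set Bb := ∑ i ∈ Finset.range (N + 1), b i with hB
    obtain ⟨Q, hQ⟩ : ∃ Q, Bb + b (N + 1) - (M + m (N + 1)) = Q := ⟨_, rfl⟩
    obtain ⟨P, hP⟩ : ∃ P, Bb - M = P := ⟨_, rfl⟩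
    rw [hQ]
    rw [hP] at ihs
    have key : m (N + 1) + Q = b (N + 1) + P := by omega
    calc ∑ i ∈ Finset.range (N + 1), m i * w i + m (N + 1) * w (N + 1) + Q * w (N + 1)
        = ∑ i ∈ Finset.range (N + 1), m i * w i
          + (m (N + 1) + Q) * w (N + 1) := by ring
      _ = ∑ i ∈ Finset.range (N + 1), m i * w i
          + (b (N + 1) + P) * w (N + 1) := by rw [key]
      _ = ∑ i ∈ Finset.range (N + 1), m i * w i + P * w (N + 1)
          + b (N + 1) * w (N + 1) := by ring
      _ ≤ ∑ i ∈ Finset.range (N + 1), m i * w i + P * w N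
          + b (N + 1) * w (N + 1) := by
          have hmono : P * w (N + 1) ≤ P * w N := Nat.mul_le_mul_left P (hw N)
          omega
      _ ≤ ∑ i ∈ Finset.range (N + 1), b i * w i + b (N + 1) * w (N + 1) :=
          Nat.add_le_add_right ihs _

lemma count_low_degree (n cc : ℕ) :
    ((Finset.univ.filter fun T : Finset (Fin n) => T.card ≤ cc)).card
      = ∑ k ∈ Finset.range (cc + 1), n.choose k := by
  classical
  have hset : (Finset.univ.filter fun T : Finset (Fin n) => T.card ≤ cc)
      = (Finset.range (cc + 1)).biUnion fun k => Finset.powersetCard k Finset.univ := by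
    ext T
    simp only [Finset.mem_filter, Finset.mem_univ, true_and, Finset.mem_biUnion,
      Finset.mem_range, Finset.mem_powersetCard, Nat.lt_succ_iff]
    constructor
    · intro h; exact ⟨T.card, h, Finset.subset_univ T, rfl⟩
    · rintro ⟨k, hk, -, rfl⟩; exact hk
  rw [hset, Finset.card_biUnion]
  · refine Finset.sum_congr rfl fun k _ => ?_
    rw [Finset.card_powersetCard, Finset.card_univ, Fintype.card_fin]
  · intro k _ l _ hkl
    simp only [Function.onFun]; rw [Finset.disjoint_left]
    intro T hTk hTl
    rw [Finset.mem_powersetCard] at hTk hTl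
    exact hkl (hTk.2 ▸ hTl.2)

/-- Main combinatorial lemma: if `S` is a finite set of points and `Wf` assigns a subspace to each
point such that `x + y ∉ Wf x` for distinct `x, y ∈ S`, then `∑ 2^{dim Wf x} ≤ 3^n`. -/
theorem main_count {n : ℕ} (S : Finset (Fin n → ZMod 2))
    (Wf : (Fin n → ZMod 2) → Submodule (ZMod 2) (Fin n → ZMod 2))
    (hkey : ∀ x ∈ S, ∀ y ∈ S, x ≠ y → x + y ∉ Wf x) :
    ∑ x ∈ S, 2 ^ (Module.finrank (ZMod 2) (Wf x)) ≤ 3 ^ n := by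
  classical
  set cx : (Fin n → ZMod 2) → ℕ :=
    fun x => Module.finrank (ZMod 2) ((Fin n → ZMod 2) ⧸ Wf x) with hcx
  set F : (Fin n → ZMod 2) → ((Fin n → ZMod 2) → ZMod 2) :=
    fun x => fun y => if x + y ∈ Wf x then (1 : ZMod 2) else 0 with hF
  have hdc : ∀ x, cx x + Module.finrank (ZMod 2) (Wf x) = n := by
    intro x
    rw [hcx]
    rw [Submodule.finrank_quotient_add_finrank (Wf x)]
    rw [Module.finrank_pi (ZMod 2)]
    exact Fintype.card_fin n
  have hcxle : ∀ x, cx x ≤ n := fun x => by have := hdc x; omega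
  -- the delta property
  have hxx : ∀ v : Fin n → ZMod 2, v + v = 0 := by
    intro v; funext i
    simp only [Pi.add_apply, Pi.zero_apply]
    exact CharTwo.add_self_eq_zero (v i)
  have hdelta1 : ∀ x, F x x = 1 := by
    intro x
    have : x + x ∈ Wf x := by rw [hxx x]; exact (Wf x).zero_mem
    simp [hF, this]
  have hdelta0 : ∀ x ∈ S, ∀ y ∈ S, x ≠ y → F x y = 0 := by
    intro x hx y hy hxy
    have : x + y ∉ Wf x := hkey x hx y hy hxy
    simp [hF, this]
  -- linear independence of the F x over S
  have hind : LinearIndependent (ZMod 2) fun x : ↥S => F ↑x := by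
    rw [linearIndependent_iff']
    intro s g hsum i hi
    have hev := congrFun hsum (↑i : Fin n → ZMod 2)
    rw [Finset.sum_apply] at hev
    simp only [Pi.smul_apply, Pi.zero_apply, smul_eq_mul] at hev
    rw [Finset.sum_eq_single i] at hev
    · rw [hdelta1 ↑i, mul_one] at hev
      exact hev
    · intro j _ hji
      rw [hdelta0 ↑j j.2 ↑i i.2 (fun hc => hji (Subtype.coe_injective hc)), mul_zero]
    · intro hc; exact absurd hi hc
  -- level counting
  have hlevel : ∀ cc : ℕ, (S.filter fun x => cx x ≤ cc).card
      ≤ ∑ k ∈ Finset.range (cc + 1), n.choose k := by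
    intro cc
    set S' := S.filter fun x => cx x ≤ cc with hS'
    have hmem : ∀ x : ↥S', F ↑x ∈ Mc n cc := by
      intro x
      have hx2 := (Finset.mem_filter.mp x.2).2
      exact Mc_le hx2 (coset_mem (Wf ↑x) ↑x)
    let v : ↥S' → ↥(Mc n cc) := fun x => ⟨F ↑x, hmem x⟩
    have hvind : LinearIndependent (ZMod 2) v := by
      apply LinearIndependent.of_comp (Mc n cc).subtype
      have hcomp : ((Mc n cc).subtype ∘ v)
          = (fun x : ↥S => F ↑x) ∘ fun x : ↥S' =>
              (⟨↑x, Finset.mem_of_mem_filter _ x.2⟩ : ↥S) := rfl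
      rw [hcomp]
      apply hind.comp
      intro a b hab
      exact Subtype.ext (by simpa using congrArg Subtype.val hab)
    haveI : Module.Finite (ZMod 2) ↥(Mc n cc) :=
      FiniteDimensional.span_of_finite _ (Finset.finite_toSet _)
    have hcard := hvind.fintype_card_le_finrank
    rw [Fintype.card_coe] at hcard
    have hrank : Module.finrank (ZMod 2) ↥(Mc n cc)
        ≤ ((Finset.univ.filter fun T : Finset (Fin n) => T.card ≤ cc)).card := by
      have h1 := finrank_span_finset_le_card
        (R := ZMod 2) ((Finset.univ.filter fun T : Finset (Fin n) => T.card ≤ cc).image (mono n))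
      unfold Set.finrank at h1
      exact le_trans h1 Finset.card_image_le
    calc S'.card ≤ Module.finrank (ZMod 2) ↥(Mc n cc) := hcard
      _ ≤ _ := hrank
      _ = ∑ k ∈ Finset.range (cc + 1), n.choose k := count_low_degree n cc
  -- rewrite the sum fiberwise over the codimension
  have hsum1 : ∑ x ∈ S, 2 ^ (Module.finrank (ZMod 2) (Wf x))
      = ∑ x ∈ S, 2 ^ (n - cx x) := by
    refine Finset.sum_congr rfl fun x _ => ?_
    congr 1
    have := hdc x
    omega
  have hsum2 : ∑ x ∈ S, 2 ^ (n - cx x)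
      = ∑ j ∈ Finset.range (n + 1), (S.filter fun x => cx x = j).card * 2 ^ (n - j) := by
    rw [← Finset.sum_fiberwise_of_maps_to' (t := Finset.range (n + 1)) (g := cx)
      (fun x _ => Finset.mem_range.mpr (Nat.lt_succ_of_le (hcxle x))) (fun j => 2 ^ (n - j))]
    refine Finset.sum_congr rfl fun j _ => ?_
    rw [Finset.sum_const, smul_eq_mul]
  have hpartial : ∀ c : ℕ, ∑ i ∈ Finset.range (c + 1), (S.filter fun x => cx x = i).card
      = (S.filter fun x => cx x ≤ c).card := by
    intro c
    induction c with
    | zero =>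
      simp only [zero_add, Finset.range_one, Finset.sum_singleton]
      congr 1
      ext x
      simp [Finset.mem_filter, Nat.le_zero]
    | succ c ihc =>
      rw [Finset.sum_range_succ, ihc]
      have hsplit : (S.filter fun x => cx x ≤ c + 1)
          = (S.filter fun x => cx x ≤ c) ∪ (S.filter fun x => cx x = c + 1) := by
        rw [← Finset.filter_or]
        refine Finset.filter_congr fun x _ => ?_
        constructor
        · intro h; exact Nat.le_add_one_iff.mp h
        · intro h; exact Nat.le_add_one_iff.mpr h
      rw [hsplit, Finset.card_union_of_disjoint]
      rw [Finset.disjoint_left]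
      intro x hx1 hx2
      have h1 := (Finset.mem_filter.mp hx1).2
      have h2 := (Finset.mem_filter.mp hx2).2
      omega
  -- apply Abel summation
  have habel := abel_sum n (fun j => (S.filter fun x => cx x = j).card)
    (fun j => n.choose j) (fun j => 2 ^ (n - j))
    (fun k => Nat.pow_le_pow_right (by norm_num) (by omega))
    (fun c _ => by rw [hpartial c]; exact hlevel c)
  have hbinom : ∑ i ∈ Finset.range (n + 1), n.choose i * 2 ^ (n - i) = 3 ^ n := by
    have h3 : (3 : ℕ) = 1 + 2 := by norm_num
    rw [h3, add_pow]
    refine Finset.sum_congr rfl fun i _ => ?_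
    rw [one_pow, one_mul, mul_comm, Nat.cast_id]
  rw [hsum1, hsum2]
  calc ∑ j ∈ Finset.range (n + 1), (S.filter fun x => cx x = j).card * 2 ^ (n - j)
      ≤ ∑ i ∈ Finset.range (n + 1), n.choose i * 2 ^ (n - i) := le_trans (Nat.le_add_right _ _) habel
    _ = 3 ^ n := hbinom

end Stmt18Aux

theorem stmt18 (n : ℕ) (hn : 1 ≤ n)
    (A : (Fin n → ZMod 2) → Finset (Fin n → ZMod 2))
    (hstar : PropertyStar A)
    (hsub : ∀ x : Fin n → ZMod 2, A x ≠ ∅ →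
      ∃ W : Submodule (ZMod 2) (Fin n → ZMod 2), (A x : Set (Fin n → ZMod 2)) = W) :
    ∑ x : Fin n → ZMod 2, (A x).card ≤ 3 ^ n := by
  classical
  have hWex : ∀ x : Fin n → ZMod 2, ∃ Wx : Submodule (ZMod 2) (Fin n → ZMod 2),
      (A x ≠ ∅ → (A x : Set (Fin n → ZMod 2)) = ↑Wx) := by
    intro x
    by_cases h : A x ≠ ∅
    · obtain ⟨Wx, hWx⟩ := hsub x h
      exact ⟨Wx, fun _ => hWx⟩
    · exact ⟨⊥, fun h' => absurd h' h⟩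
  choose W hW using hWex
  set S : Finset (Fin n → ZMod 2) := Finset.univ.filter fun x => A x ≠ ∅ with hS
  have hmemS : ∀ x, x ∈ S ↔ A x ≠ ∅ := by
    intro x; simp [hS]
  have hmemiff : ∀ x, x ∈ S → ∀ a, a ∈ A x ↔ a ∈ W x := by
    intro x hx a
    have h1 := hW x ((hmemS x).mp hx)
    constructor
    · intro ha
      have : a ∈ (A x : Set (Fin n → ZMod 2)) := Finset.mem_coe.mpr ha
      rw [h1] at this
      exact this
    · intro ha
      have : a ∈ (A x : Set (Fin n → ZMod 2)) := by rw [h1]; exact ha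
      exact Finset.mem_coe.mp this
  have hxx : ∀ v : Fin n → ZMod 2, v + v = 0 := by
    intro v; funext i
    simp only [Pi.add_apply, Pi.zero_apply]
    exact CharTwo.add_self_eq_zero (v i)
  -- the key pairwise condition
  have hkey : ∀ x ∈ S, ∀ y ∈ S, x ≠ y → x + y ∉ W x := by
    intro x hx y hy hxy hmem
    have hxyne : x + y ≠ 0 := by
      intro h0
      apply hxy
      have : x + (x + y) = x + 0 := by rw [h0]
      rw [← add_assoc, hxx x, zero_add, add_zero] at this
      exact this.symm
    have h0A : (0 : Fin n → ZMod 2) ∈ A x := (hmemiff x hx 0).mpr (W x).zero_mem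
    have hxyA : x + y ∈ A x := (hmemiff x hx (x + y)).mpr hmem
    have hAy : A y = ∅ := by
      apply hstar x y
      refine ⟨0, h0A, x + y, hxyA, fun h => hxyne h.symm, ?_⟩
      rw [add_zero, ← add_assoc, hxx x, zero_add]
    exact (hmemS y).mp hy hAy
  -- rewrite the total sum over S with cardinalities 2^dim
  have hcard : ∀ x ∈ S, (A x).card = 2 ^ (Module.finrank (ZMod 2) (W x)) := by
    intro x hx
    rw [← Fintype.card_coe (A x)]
    have hequiv : ↥(A x) ≃ ↥(W x) := Equiv.subtypeEquivRight (hmemiff x hx)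
    rw [Fintype.card_congr hequiv]
    rw [Module.card_eq_pow_finrank (K := ZMod 2) (V := ↥(W x)), ZMod.card 2]
  have hsum0 : ∑ x : Fin n → ZMod 2, (A x).card = ∑ x ∈ S, (A x).card := by
    rw [hS]
    rw [Finset.sum_filter_of_ne]
    intro x _ hne
    intro hempty
    rw [hempty] at hne
    simp at hne
  rw [hsum0]
  rw [Finset.sum_congr rfl hcard]
  exact Stmt18Aux.main_count S W hkey
end
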